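/- arXiv:2007.11313 — 3 statements merged into one kernel-verified Lean document; each statement's English description precedes it below -/
import Mathlib

section
/- Let β > 0, α > 0 and m ∈ ℕ_0. Then the map x ↦ E_{β,x}[ e^{−α A_m(I)} | I ∈ B^+_m ] is non-increasing on ℕ_0, where B^+_m := {(I_k)_{k=1}^m : I_k ≥ 0 for all 1 ≤ k ≤ m}. The same monotonicity holds when conditioning on B^{0,+}_m (i.e. additionally requiring I_m = 0) instead of B^+_m. -/
open Filter

attribute [local instance] Classical.propDecidable

noncomputable section

/-- The normalizing constant `c_β = Σ_{k∈ℤ} e^{−β|k|/2} = (1+e^{−β/2})/(1−e^{−β/2})`. -/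
def cb (β : ℝ) : ℝ := (1 + Real.exp (-β / 2)) / (1 - Real.exp (-β / 2))

/-- The step distribution `P_β` on `ℤ`: `P_β({k}) = e^{−β|k|/2}/c_β`. -/
def pb (β : ℝ) (k : ℤ) : ℝ := Real.exp (-(β / 2) * |(k : ℝ)|) / cb β

/-- `Γ_β := c_β e^{−β}`. -/
def Gam (β : ℝ) : ℝ := cb β * Real.exp (-β)

/-- `tildeδ_c(β) := −log(1−e^{−β/2})`. -/
def tdc (β : ℝ) : ℝ := -Real.log (1 - Real.exp (-β / 2))

/-- The position `X_k` (1-based time `k`) of the path `(X_1,…,X_n)` started at `x`;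
by convention it is `x` for `k = 0` (and for `k > n`). -/
def valx (x : ℤ) {n : ℕ} (X : Fin n → ℤ) (k : ℕ) : ℤ :=
  if h : 1 ≤ k ∧ k ≤ n then X ⟨k - 1, by omega⟩ else x

/-- The probability weight of the path `(X_1,…,X_n)` of the walk started at `x`,
with i.i.d. increments of law `P_β`. -/
def wt (β : ℝ) (x : ℤ) {n : ℕ} (X : Fin n → ℤ) : ℝ :=
  ∏ k ∈ Finset.Icc 1 n, pb β (valx x X k - valx x X (k - 1))

/-- The expectation `E_{β,x}[F(X_1,…,X_n)]` for the `n`-step walk started at `x`. -/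
def Ewalk (β : ℝ) (x : ℤ) (n : ℕ) (F : (Fin n → ℤ) → ℝ) : ℝ :=
  ∑' X : Fin n → ℤ, F X * wt β x X

/-- The event `B^{0,+}_n`: the walk is non-negative and ends at `0`. -/
def inB0 {n : ℕ} (X : Fin n → ℤ) : Prop :=
  valx 0 X n = 0 ∧ ∀ k : Fin n, 0 ≤ X k

/-- The number of zeros among `X_1,…,X_n`. -/
def nzW {n : ℕ} (X : Fin n → ℤ) : ℕ := (Finset.univ.filter fun k : Fin n => X k = 0).card

/-- The signed area `A_n(X) = Σ_{i=0}^n X_i`, with `X_0 = x`. -/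
def area (x : ℤ) {n : ℕ} (X : Fin n → ℤ) : ℤ := x + ∑ k, X k

/-- The wetting partition function `Z_wet,N^{β,δ}`. -/
def Zwet (β δ : ℝ) (N : ℕ) : ℝ :=
  Ewalk β 0 N fun X => Real.exp (δ * (nzW X : ℝ)) * (if inB0 X then 1 else 0)

/-- The wetting free energy `h_β(δ)`; the limit of `(1/N) log Z_wet,N` exists by
supermultiplicativity, so it coincides with the `limsup` used here. -/
def hbeta (β δ : ℝ) : ℝ := limsup (fun N : ℕ => Real.log (Zwet β δ N) / (N : ℝ)) atTop


namespace S14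

lemma exp_lt_one' (β : ℝ) (hβ : 0 < β) : Real.exp (-β / 2) < 1 := by
  rw [Real.exp_lt_one_iff]; linarith

lemma cb_pos {β : ℝ} (hβ : 0 < β) : 0 < cb β := by
  have h1 := exp_lt_one' β hβ
  have h2 := Real.exp_pos (-β / 2)
  exact div_pos (by linarith) (by linarith)

lemma pb_pos {β : ℝ} (hβ : 0 < β) (k : ℤ) : 0 < pb β k :=
  div_pos (Real.exp_pos _) (cb_pos hβ)

lemma pb_summable {β : ℝ} (hβ : 0 < β) : Summable (fun k : ℤ => pb β k) := by
  have hr : Real.exp (-β/2) < 1 := exp_lt_one' β hβ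
  have h0 : (0:ℝ) ≤ Real.exp (-β/2) := (Real.exp_pos _).le
  have key : ∀ k : ℤ, pb β k = (Real.exp (-β/2)) ^ k.natAbs / cb β := by
    intro k
    rw [pb, ← Real.exp_nat_mul]
    congr 2
    rw [Nat.cast_natAbs]
    push_cast
    ring
  rw [funext key]
  apply Summable.div_const
  apply Summable.of_nat_of_neg <;> simp only [Int.natAbs_natCast, Int.natAbs_neg] <;>
    exact summable_geometric_of_lt_one h0 hr

lemma pb_mlr {β : ℝ} (hβ : 0 < β) {x y z w : ℤ} (hxy : x ≤ y) (hzw : z ≤ w) :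
    pb β (z - y) * pb β (w - x) ≤ pb β (z - x) * pb β (w - y) := by
  have hc := cb_pos hβ
  rw [pb, pb, pb, pb, div_mul_div_comm, div_mul_div_comm]
  apply div_le_div_of_nonneg_right ?_ (by positivity)
  rw [← Real.exp_add, ← Real.exp_add, Real.exp_le_exp]
  have habs : |((z - x : ℤ) : ℝ)| + |((w - y : ℤ) : ℝ)| ≤ |((z - y : ℤ) : ℝ)| + |((w - x : ℤ) : ℝ)| := by
    rw [← Int.cast_abs, ← Int.cast_abs, ← Int.cast_abs, ← Int.cast_abs]
    push_cast [← Int.cast_add]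
    have : |z - x| + |w - y| ≤ |z - y| + |w - x| := by
      rcases abs_cases (z - x) with ⟨e1, _⟩ | ⟨e1, _⟩ <;>
      rcases abs_cases (w - y) with ⟨e2, _⟩ | ⟨e2, _⟩ <;>
      rcases abs_cases (z - y) with ⟨e3, _⟩ | ⟨e3, _⟩ <;>
      rcases abs_cases (w - x) with ⟨e4, _⟩ | ⟨e4, _⟩ <;> omega
    exact_mod_cast this
  nlinarith [habs, hβ]

open ENNReal

lemma crossineq {p2 p1 U V : ℝ≥0∞} (hp : p2 ≤ p1) (hUV : V ≤ U) :
    p2 * U + p1 * V ≤ p1 * U + p2 * V := by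
  obtain ⟨c, hc⟩ : ∃ c, p1 = c + p2 := ⟨p1 - p2, (tsub_add_cancel_of_le hp).symm⟩
  subst hc
  calc p2 * U + (c + p2) * V = p2 * U + p2 * V + c * V := by ring
    _ ≤ p2 * U + p2 * V + c * U := add_le_add_right (mul_le_mul_right hUV _) _
    _ = (c + p2) * U + p2 * V := by ring

lemma tsum_mul_tsum' (f g : ℤ → ℝ≥0∞) :
    (∑' z, f z) * (∑' z, g z) = ∑' p : ℤ × ℤ, f p.1 * g p.2 := by
  rw [ENNReal.tsum_prod']
  simp_rw [ENNReal.tsum_mul_left]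
  rw [ENNReal.tsum_mul_right]

lemma core (A B N D : ℤ → ℝ≥0∞)
    (h1 : ∀ z w : ℤ, z ≤ w → B z * A w ≤ A z * B w)
    (h2 : ∀ z w : ℤ, z ≤ w → N w * D z ≤ N z * D w) :
    (∑' z, B z * N z) * (∑' z, A z * D z) ≤ (∑' z, A z * N z) * (∑' z, B z * D z) := by
  rw [tsum_mul_tsum', tsum_mul_tsum']
  set L : ℤ × ℤ → ℝ≥0∞ := fun p => B p.1 * N p.1 * (A p.2 * D p.2) with hL
  set R : ℤ × ℤ → ℝ≥0∞ := fun p => A p.1 * N p.1 * (B p.2 * D p.2) with hR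
  have hswap : ∀ h : ℤ × ℤ → ℝ≥0∞, ∑' p : ℤ × ℤ, h (p.2, p.1) = ∑' p, h p := by
    intro h
    exact (Equiv.prodComm ℤ ℤ).tsum_eq h
  have key : ∀ p : ℤ × ℤ, L p + L (p.2, p.1) ≤ R p + R (p.2, p.1) := by
    rintro ⟨z, w⟩
    rcases le_total z w with h | h
    · have := crossineq (h1 z w h) (h2 z w h)
      calc L (z, w) + L (w, z) = (B z * A w) * (N z * D w) + (A z * B w) * (N w * D z) := by
            simp only [hL]; ring
        _ ≤ (A z * B w) * (N z * D w) + (B z * A w) * (N w * D z) := this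
        _ = R (z, w) + R (w, z) := by simp only [hR]; ring
    · have := crossineq (h1 w z h) (h2 w z h)
      calc L (z, w) + L (w, z) = (B w * A z) * (N w * D z) + (A w * B z) * (N z * D w) := by
            simp only [hL]; ring
        _ ≤ (A w * B z) * (N w * D z) + (B w * A z) * (N z * D w) := this
        _ = R (z, w) + R (w, z) := by simp only [hR]; ring
  have hsum : (∑' p, L p) + (∑' p, L p) ≤ (∑' p, R p) + (∑' p, R p) := by
    calc (∑' p, L p) + (∑' p, L p) = (∑' p, L p) + (∑' p : ℤ × ℤ, L (p.2, p.1)) := by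
          rw [hswap]
      _ = ∑' p : ℤ × ℤ, (L p + L (p.2, p.1)) := (ENNReal.tsum_add).symm
      _ ≤ ∑' p : ℤ × ℤ, (R p + R (p.2, p.1)) := ENNReal.tsum_le_tsum key
      _ = (∑' p, R p) + (∑' p : ℤ × ℤ, R (p.2, p.1)) := ENNReal.tsum_add
      _ = (∑' p, R p) + (∑' p, R p) := by rw [hswap]
  have h2' : (2:ℝ≥0∞) * (∑' p, L p) ≤ 2 * (∑' p, R p) := by
    rw [two_mul, two_mul]; exact hsum
  exact (ENNReal.mul_le_mul_iff_right (by norm_num) (by norm_num)).mp h2'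

def pE (β : ℝ) (z : ℤ) : ℝ≥0∞ := ENNReal.ofReal (pb β z)

def phiB (β α : ℝ) (b : ℤ → ℝ≥0∞) : ℕ → ℤ → ℝ≥0∞
  | 0, x => ENNReal.ofReal (Real.exp (-α * (x : ℝ))) * b x
  | (n+1), x => ENNReal.ofReal (Real.exp (-α * (x : ℝ))) *
      ∑' z : ℤ, if 0 ≤ z then pE β (z - x) * phiB β α b n z else 0

/-- indicator of `E` as an `ℝ≥0∞`-valued function -/
def ind (E : ℤ → Prop) : ℤ → ℝ≥0∞ := fun z => if E z then 1 else 0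

lemma ind_le_one (E : ℤ → Prop) (z : ℤ) : ind E z ≤ 1 := by
  rw [ind]; split <;> simp

lemma pE_pos {β : ℝ} (hβ : 0 < β) (z : ℤ) : 0 < pE β z :=
  ENNReal.ofReal_pos.mpr (pb_pos hβ z)

lemma pE_mlr {β : ℝ} (hβ : 0 < β) {x y z w : ℤ} (hxy : x ≤ y) (hzw : z ≤ w) :
    pE β (z - y) * pE β (w - x) ≤ pE β (z - x) * pE β (w - y) := by
  rw [pE, pE, pE, pE, ← ENNReal.ofReal_mul (pb_pos hβ _).le, ← ENNReal.ofReal_mul (pb_pos hβ _).le]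
  exact ENNReal.ofReal_le_ofReal (pb_mlr hβ hxy hzw)

lemma mono {β α : ℝ} (hβ : 0 < β) (hα : 0 ≤ α) (b : ℤ → ℝ≥0∞) :
    ∀ n : ℕ, ∀ z w : ℤ, z ≤ w →
      phiB β α b n w * phiB β 0 b n z ≤ phiB β α b n z * phiB β 0 b n w := by
  intro n
  induction n with
  | zero =>
    intro z w hzw
    simp only [phiB]
    have he : ENNReal.ofReal (Real.exp (-α * (w : ℝ))) ≤ ENNReal.ofReal (Real.exp (-α * (z : ℝ))) := by
      apply ENNReal.ofReal_le_ofReal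
      apply Real.exp_le_exp.mpr
      have : (z : ℝ) ≤ (w : ℝ) := by exact_mod_cast hzw
      nlinarith
    calc ENNReal.ofReal (Real.exp (-α * (w:ℝ))) * b w * (ENNReal.ofReal (Real.exp (-0 * (z:ℝ))) * b z)
        = ENNReal.ofReal (Real.exp (-α * (w:ℝ))) * (ENNReal.ofReal (Real.exp (-0 * (z:ℝ))) * (b z * b w)) := by ring
      _ ≤ ENNReal.ofReal (Real.exp (-α * (z:ℝ))) * (ENNReal.ofReal (Real.exp (-0 * (w:ℝ))) * (b z * b w)) := by
          apply mul_le_mul' he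
          apply mul_le_mul' _ le_rfl
          simp
      _ = ENNReal.ofReal (Real.exp (-α * (z:ℝ))) * b z * (ENNReal.ofReal (Real.exp (-0 * (w:ℝ))) * b w) := by ring
  | succ n ih =>
    intro z w hzw
    simp only [phiB]
    set A : ℤ → ℝ≥0∞ := fun u => if 0 ≤ u then pE β (u - z) else 0 with hA
    set B : ℤ → ℝ≥0∞ := fun u => if 0 ≤ u then pE β (u - w) else 0 with hB
    set N : ℤ → ℝ≥0∞ := fun u => phiB β α b n u with hN
    set D : ℤ → ℝ≥0∞ := fun u => phiB β 0 b n u with hD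
    have hrw : ∀ (s : ℤ) (G : ℤ → ℝ≥0∞),
        (∑' u : ℤ, if 0 ≤ u then pE β (u - s) * G u else 0)
          = ∑' u : ℤ, (fun v => if 0 ≤ v then pE β (v - s) else 0) u * G u := by
      intro s G
      apply tsum_congr
      intro u
      by_cases h : 0 ≤ u <;> simp [h]
    rw [hrw z N, hrw w N, hrw z D, hrw w D]
    have hcore : (∑' u, B u * N u) * (∑' u, A u * D u) ≤ (∑' u, A u * N u) * (∑' u, B u * D u) := by
      apply core
      · intro u v huv
        simp only [hA, hB]
        by_cases h1 : 0 ≤ u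
        · by_cases h2 : 0 ≤ v
          · simp only [if_pos h1, if_pos h2]
            exact pE_mlr hβ hzw huv
          · simp [h2]
        · simp [h1]
      · exact fun u v huv => ih u v huv
    have he : ENNReal.ofReal (Real.exp (-α * (w : ℝ))) ≤ ENNReal.ofReal (Real.exp (-α * (z : ℝ))) := by
      apply ENNReal.ofReal_le_ofReal
      apply Real.exp_le_exp.mpr
      have : (z : ℝ) ≤ (w : ℝ) := by exact_mod_cast hzw
      nlinarith
    calc ENNReal.ofReal (Real.exp (-α * (w:ℝ))) * (∑' u, B u * N u) *
          (ENNReal.ofReal (Real.exp (-0 * (z:ℝ))) * (∑' u, A u * D u))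
        = ENNReal.ofReal (Real.exp (-α * (w:ℝ))) * (ENNReal.ofReal (Real.exp (-0 * (z:ℝ))) *
            ((∑' u, B u * N u) * (∑' u, A u * D u))) := by ring
      _ ≤ ENNReal.ofReal (Real.exp (-α * (z:ℝ))) * (ENNReal.ofReal (Real.exp (-0 * (w:ℝ))) *
            ((∑' u, A u * N u) * (∑' u, B u * D u))) := by
          apply mul_le_mul' he
          apply mul_le_mul' _ hcore
          simp
      _ = ENNReal.ofReal (Real.exp (-α * (z:ℝ))) * (∑' u, A u * N u) *
            (ENNReal.ofReal (Real.exp (-0 * (w:ℝ))) * (∑' u, B u * D u)) := by ring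

lemma pE_tsum_ne_top {β : ℝ} (hβ : 0 < β) : (∑' z : ℤ, pE β z) ≠ ⊤ := by
  simp only [pE]
  rw [← ENNReal.ofReal_tsum_of_nonneg (fun k => (pb_pos hβ k).le) (pb_summable hβ)]
  exact ENNReal.ofReal_ne_top

lemma pE_tsum_shift (β : ℝ) (x : ℤ) : (∑' z : ℤ, pE β (z - x)) = ∑' z : ℤ, pE β z := by
  have := (Equiv.subRight x).tsum_eq (fun z => pE β z)
  simpa using this

lemma phiB_zero_le_pow {β : ℝ} (hβ : 0 < β) {b : ℤ → ℝ≥0∞} (hb : ∀ z, b z ≤ 1) :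
    ∀ n x, phiB β 0 b n x ≤ (∑' z : ℤ, pE β z) ^ n := by
  intro n
  induction n with
  | zero => intro x; simpa [phiB] using hb x
  | succ n ih =>
    intro x
    rw [phiB]
    simp only [neg_zero, zero_mul, Real.exp_zero, ENNReal.ofReal_one, one_mul]
    calc (∑' z : ℤ, if 0 ≤ z then pE β (z - x) * phiB β 0 b n z else 0)
        ≤ ∑' z : ℤ, pE β (z - x) * (∑' z : ℤ, pE β z) ^ n := by
          apply ENNReal.tsum_le_tsum
          intro z
          by_cases h : 0 ≤ z
          · simp only [if_pos h]
            exact mul_le_mul' le_rfl (ih z)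
          · simp [h]
      _ = (∑' z : ℤ, pE β z) ^ n * ∑' z : ℤ, pE β (z - x) := by
          rw [ENNReal.tsum_mul_right]; ring
      _ = (∑' z : ℤ, pE β z) ^ (n + 1) := by rw [pE_tsum_shift]; ring

lemma phiB_zero_ne_top {β : ℝ} (hβ : 0 < β) {b : ℤ → ℝ≥0∞} (hb : ∀ z, b z ≤ 1)
    (n : ℕ) (x : ℤ) : phiB β 0 b n x ≠ ⊤ :=
  ne_top_of_le_ne_top (pow_ne_top (pE_tsum_ne_top hβ)) (phiB_zero_le_pow hβ hb n x)

lemma phiB_le_zero {β α : ℝ} (hα : 0 ≤ α) (b : ℤ → ℝ≥0∞) :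
    ∀ n x, 0 ≤ x → phiB β α b n x ≤ phiB β 0 b n x := by
  intro n
  have he : ∀ x : ℤ, 0 ≤ x → ENNReal.ofReal (Real.exp (-α * (x:ℝ))) ≤
      ENNReal.ofReal (Real.exp (-0 * (x:ℝ))) := by
    intro x hx
    apply ENNReal.ofReal_le_ofReal
    apply Real.exp_le_exp.mpr
    have : (0:ℝ) ≤ (x:ℝ) := by exact_mod_cast hx
    nlinarith
  induction n with
  | zero =>
    intro x hx
    exact mul_le_mul' (he x hx) le_rfl
  | succ n ih =>
    intro x hx
    apply mul_le_mul' (he x hx)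
    apply ENNReal.tsum_le_tsum
    intro z
    by_cases h : 0 ≤ z
    · simp only [if_pos h]
      exact mul_le_mul' le_rfl (ih z h)
    · simp [h]

lemma phiB_ne_top {β α : ℝ} (hβ : 0 < β) (hα : 0 ≤ α) {b : ℤ → ℝ≥0∞} (hb : ∀ z, b z ≤ 1)
    (n : ℕ) {x : ℤ} (hx : 0 ≤ x) : phiB β α b n x ≠ ⊤ :=
  ne_top_of_le_ne_top (phiB_zero_ne_top hβ hb n x) (phiB_le_zero hα b n x hx)

lemma phiB_ne_zero_zero {β α : ℝ} (hβ : 0 < β) {b : ℤ → ℝ≥0∞} (hb0 : b 0 ≠ 0) :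
    ∀ n, phiB β α b n 0 ≠ 0 := by
  intro n
  induction n with
  | zero => simp [phiB, Real.exp_pos, hb0]
  | succ n ih =>
    rw [phiB]
    apply mul_ne_zero (by simp [Real.exp_pos])
    have hterm : pE β (0 - 0) * phiB β α b n 0 ≤
        ∑' z : ℤ, if 0 ≤ z then pE β (z - 0) * phiB β α b n z else 0 := by
      have := ENNReal.le_tsum (f := fun z : ℤ => if 0 ≤ z then pE β (z - 0) * phiB β α b n z else 0) 0
      simpa using this
    intro hc
    rw [hc] at hterm
    exact mul_ne_zero (pE_pos hβ (0 - 0)).ne' ih (le_antisymm hterm zero_le)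

lemma phiB_ne_zero_succ {β α : ℝ} (hβ : 0 < β) {b : ℤ → ℝ≥0∞} (hb0 : b 0 ≠ 0)
    (n : ℕ) (x : ℤ) : phiB β α b (n + 1) x ≠ 0 := by
  rw [phiB]
  apply mul_ne_zero (by simp [Real.exp_pos])
  have hterm : pE β (0 - x) * phiB β α b n 0 ≤
      ∑' z : ℤ, if 0 ≤ z then pE β (z - x) * phiB β α b n z else 0 := by
    have := ENNReal.le_tsum (f := fun z : ℤ => if 0 ≤ z then pE β (z - x) * phiB β α b n z else 0) 0
    simpa using this
  intro hc
  rw [hc] at hterm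
  exact mul_ne_zero (pE_pos hβ (0 - x)).ne' (phiB_ne_zero_zero (α := α) hβ hb0 n)
    (le_antisymm hterm zero_le)

lemma phiB_ne_zero_all {β α : ℝ} (hβ : 0 < β) {b : ℤ → ℝ≥0∞} (hb : ∀ z, b z ≠ 0) :
    ∀ n x, phiB β α b n x ≠ 0 := by
  intro n x
  cases n with
  | zero => simp [phiB, Real.exp_pos, hb x]
  | succ n => exact phiB_ne_zero_succ hβ (hb 0) n x

lemma valx_zero' (x : ℤ) {n : ℕ} (X : Fin n → ℤ) : valx x X 0 = x := by
  simp [valx]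

lemma valx_shift (x : ℤ) {n : ℕ} (X : Fin (n+1) → ℤ) {j : ℕ} (hj : j ≤ n) :
    valx x X (j+1) = valx (X 0) (fun i : Fin n => X i.succ) j := by
  rcases j with _ | k
  · rw [valx, valx]
    rw [dif_pos (by omega), dif_neg (by omega)]
    exact congrArg X (by ext; simp)
  · rw [valx, valx]
    rw [dif_pos (by omega), dif_pos (by omega)]
    exact congrArg X (by ext; simp only [Fin.val_succ]; omega)

lemma area_cons (x z : ℤ) {n : ℕ} (Y : Fin n → ℤ) :
    area x (Fin.cons z Y) = x + area z Y := by
  simp [area, Fin.sum_cons]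

lemma forall_cons (z : ℤ) {n : ℕ} (Y : Fin n → ℤ) :
    (∀ k : Fin (n+1), 0 ≤ (Fin.cons z Y : Fin (n+1) → ℤ) k) ↔ (0 ≤ z ∧ ∀ k : Fin n, 0 ≤ Y k) := by
  constructor
  · intro h
    exact ⟨by simpa using h 0, fun k => by simpa using h k.succ⟩
  · rintro ⟨h0, h⟩ k
    refine Fin.cases ?_ ?_ k
    · simpa
    · intro i
      simpa using h i

lemma tail_cons' (z : ℤ) {n : ℕ} (Y : Fin n → ℤ) :
    (fun i : Fin n => (Fin.cons z Y : Fin (n+1) → ℤ) i.succ) = Y := by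
  funext i; simp

lemma valx_cons_succ (x z : ℤ) {n : ℕ} (Y : Fin n → ℤ) {j : ℕ} (hj : j ≤ n) :
    valx x (Fin.cons z Y) (j+1) = valx z Y j := by
  rw [valx_shift x (Fin.cons z Y) hj, tail_cons']
  simp

lemma wt_cons (β : ℝ) (x z : ℤ) {n : ℕ} (Y : Fin n → ℤ) :
    wt β x (Fin.cons z Y) = pb β (z - x) * wt β z Y := by
  rw [wt, wt]
  rw [← Finset.Ico_add_one_right_eq_Icc, ← Finset.Ico_add_one_right_eq_Icc,
    Finset.prod_Ico_eq_prod_range, Finset.prod_Ico_eq_prod_range]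
  have hm : n + 1 + 1 - 1 = n + 1 := by omega
  have hm2 : n + 1 - 1 = n := by omega
  rw [hm, hm2, Finset.prod_range_succ']
  conv_rhs => rw [mul_comm]
  congr 1
  · apply Finset.prod_congr rfl
    intro i hi
    rw [Finset.mem_range] at hi
    have h2 : 1 + (i + 1) - 1 = i + 1 := by omega
    have h1 : 1 + (i + 1) = i + 1 + 1 := by omega
    rw [h2, h1, valx_cons_succ x z Y (show i + 1 ≤ n by omega),
      valx_cons_succ x z Y (show i ≤ n by omega)]
    have h3 : 1 + i = i + 1 := by omega
    rw [h3]
    have h4 : i + 1 - 1 = i := by omega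
    rw [h4]

lemma valx_cons_last (x z : ℤ) {n : ℕ} (Y : Fin n → ℤ) :
    valx x (Fin.cons z Y) (n+1) = valx z Y n :=
  valx_cons_succ x z Y le_rfl

lemma wt_nonneg {β : ℝ} (hβ : 0 < β) (x : ℤ) {n : ℕ} (X : Fin n → ℤ) : 0 ≤ wt β x X :=
  Finset.prod_nonneg fun k _ => (pb_pos hβ _).le

lemma bridge {β : ℝ} (hβ : 0 < β) (α : ℝ) (E : ℤ → Prop) :
    ∀ (n : ℕ) (x : ℤ),
      (∑' X : Fin n → ℤ, ENNReal.ofReal (Real.exp (-α * (area x X : ℝ)) *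
          (if ((∀ k : Fin n, 0 ≤ X k) ∧ E (valx x X n)) then 1 else 0) * wt β x X))
        = phiB β α (ind E) n x := by
  intro n
  induction n with
  | zero =>
    intro x
    have huniq : ∀ (g : (Fin 0 → ℤ) → ℝ≥0∞), (∑' X : Fin 0 → ℤ, g X) = g (fun i => i.elim0) := by
      intro g
      exact tsum_eq_single _ (fun b hb => absurd (Subsingleton.elim b _) hb)
    rw [huniq]
    have h1 : area x (fun i : Fin 0 => i.elim0) = x := by simp [area]
    have h2 : wt β x (fun i : Fin 0 => i.elim0) = 1 := by
      rw [wt]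
      have : Finset.Icc 1 0 = (∅ : Finset ℕ) := by simp
      rw [this, Finset.prod_empty]
    have h3 : valx x (fun i : Fin 0 => i.elim0) 0 = x := valx_zero' x _
    rw [h1, h2, h3, phiB]
    by_cases hE : E x <;> simp [hE, ind]
  | succ n ih =>
    intro x
    rw [← (Fin.consEquiv (fun _ : Fin (n+1) => ℤ)).tsum_eq, ENNReal.tsum_prod']
    rw [phiB, ← ENNReal.tsum_mul_left]
    apply tsum_congr
    intro z
    by_cases hz : 0 ≤ z
    · rw [if_pos hz]
      have hterm : ∀ Y : Fin n → ℤ,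
          ENNReal.ofReal (Real.exp (-α * (area x ((Fin.consEquiv (fun _ : Fin (n+1) => ℤ)) (z, Y)) : ℝ)) *
            (if ((∀ k : Fin (n+1), 0 ≤ (Fin.consEquiv (fun _ : Fin (n+1) => ℤ)) (z, Y) k) ∧
                E (valx x ((Fin.consEquiv (fun _ : Fin (n+1) => ℤ)) (z, Y)) (n+1))) then 1 else 0) *
            wt β x ((Fin.consEquiv (fun _ : Fin (n+1) => ℤ)) (z, Y)))
          = (ENNReal.ofReal (Real.exp (-α * (x : ℝ))) * pE β (z - x)) *
            ENNReal.ofReal (Real.exp (-α * (area z Y : ℝ)) *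
              (if ((∀ k : Fin n, 0 ≤ Y k) ∧ E (valx z Y n)) then 1 else 0) * wt β z Y) := by
        intro Y
        have hC : (Fin.consEquiv (fun _ : Fin (n+1) => ℤ)) (z, Y) = Fin.cons z Y := rfl
        rw [hC]
        have hiff : ((∀ k : Fin (n+1), 0 ≤ (Fin.cons z Y : Fin (n+1) → ℤ) k) ∧
            E (valx x (Fin.cons z Y) (n+1))) ↔
            ((∀ k : Fin n, 0 ≤ Y k) ∧ E (valx z Y n)) := by
          rw [forall_cons, valx_cons_last]
          constructor
          · rintro ⟨⟨_, h1⟩, h2⟩; exact ⟨h1, h2⟩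
          · rintro ⟨h1, h2⟩; exact ⟨⟨hz, h1⟩, h2⟩
        rw [area_cons, wt_cons]
        have hexp : Real.exp (-α * ((x + area z Y : ℤ) : ℝ)) =
            Real.exp (-α * (x : ℝ)) * Real.exp (-α * (area z Y : ℝ)) := by
          rw [← Real.exp_add]
          congr 1
          push_cast
          ring
        rw [hexp]
        have hif : (if ((∀ k : Fin (n+1), 0 ≤ (Fin.cons z Y : Fin (n+1) → ℤ) k) ∧
            E (valx x (Fin.cons z Y) (n+1))) then (1:ℝ) else 0)
            = (if ((∀ k : Fin n, 0 ≤ Y k) ∧ E (valx z Y n)) then 1 else 0) := by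
          exact if_congr hiff rfl rfl
        rw [hif, pE]
        rw [← ENNReal.ofReal_mul (Real.exp_pos _).le,
          ← ENNReal.ofReal_mul (mul_nonneg (Real.exp_pos _).le (pb_pos hβ _).le)]
        congr 1
        ring
      rw [tsum_congr hterm, ENNReal.tsum_mul_left, ← ih z]
      rw [mul_assoc]
    · rw [if_neg hz]
      rw [mul_zero]
      apply ENNReal.tsum_eq_zero.mpr
      intro Y
      have hC : (Fin.consEquiv (fun _ : Fin (n+1) => ℤ)) (z, Y) = Fin.cons z Y := rfl
      rw [hC]
      have : ¬ ((∀ k : Fin (n+1), 0 ≤ (Fin.cons z Y : Fin (n+1) → ℤ) k) ∧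
          E (valx x (Fin.cons z Y) (n+1))) := by
        rintro ⟨h1, _⟩
        exact hz ((forall_cons z Y).mp h1).1
      rw [if_neg this, mul_zero, zero_mul, ENNReal.ofReal_zero]

lemma valx_irrel (x x' : ℤ) {n : ℕ} (X : Fin (n+1) → ℤ) :
    valx x X (n+1) = valx x' X (n+1) := by
  rw [valx, valx, dif_pos (by omega), dif_pos (by omega)]

lemma inB0_iff (s : ℤ) {n : ℕ} (X : Fin (n+1) → ℤ) :
    inB0 X ↔ ((∀ k : Fin (n+1), 0 ≤ X k) ∧ valx s X (n+1) = 0) := by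
  rw [inB0, valx_irrel 0 s X]
  exact and_comm

lemma Ewalk_zero {β : ℝ} (s : ℤ) (F : (Fin 0 → ℤ) → ℝ) :
    Ewalk β s 0 F = F (fun i : Fin 0 => i.elim0) := by
  rw [Ewalk]
  rw [tsum_eq_single (fun i : Fin 0 => i.elim0) (fun b hb => absurd (Subsingleton.elim b _) hb)]
  have h2 : wt β s (fun i : Fin 0 => i.elim0) = 1 := by
    rw [wt]
    have : Finset.Icc 1 0 = (∅ : Finset ℕ) := by simp
    rw [this, Finset.prod_empty]
  rw [h2, mul_one]

lemma Ewalk_eq {β : ℝ} (hβ : 0 < β) (x : ℤ) (n : ℕ) (F : (Fin n → ℤ) → ℝ)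
    (hF : ∀ X, 0 ≤ F X) :
    Ewalk β x n F = (∑' X : Fin n → ℤ, ENNReal.ofReal (F X * wt β x X)).toReal := by
  rw [Ewalk, ENNReal.tsum_toReal_eq (fun _ => ENNReal.ofReal_ne_top)]
  exact tsum_congr fun X => (ENNReal.toReal_ofReal (mul_nonneg (hF X) (wt_nonneg hβ x X))).symm

end S14

/-- `x ↦ E_{β,x}[e^{−α A_m(I)} | I ∈ B^+_m]` is non-increasing on `ℕ₀`,
and the same holds when conditioning on `B^{0,+}_m`. -/
theorem statement14 (β α : ℝ) (hβ : 0 < β) (hα : 0 < α) (m : ℕ) :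
    (∀ x y : ℕ, x ≤ y →
      (Ewalk β (y : ℤ) m fun I =>
          Real.exp (-α * (area (y : ℤ) I : ℝ)) * (if (∀ k : Fin m, 0 ≤ I k) then 1 else 0)) /
          (Ewalk β (y : ℤ) m fun I => if (∀ k : Fin m, 0 ≤ I k) then 1 else 0) ≤
        (Ewalk β (x : ℤ) m fun I =>
            Real.exp (-α * (area (x : ℤ) I : ℝ)) * (if (∀ k : Fin m, 0 ≤ I k) then 1 else 0)) /
          (Ewalk β (x : ℤ) m fun I => if (∀ k : Fin m, 0 ≤ I k) then 1 else 0)) ∧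
    (∀ x y : ℕ, x ≤ y →
      (Ewalk β (y : ℤ) m fun I =>
          Real.exp (-α * (area (y : ℤ) I : ℝ)) * (if inB0 I then 1 else 0)) /
          (Ewalk β (y : ℤ) m fun I => if inB0 I then 1 else 0) ≤
        (Ewalk β (x : ℤ) m fun I =>
            Real.exp (-α * (area (x : ℤ) I : ℝ)) * (if inB0 I then 1 else 0)) /
          (Ewalk β (x : ℤ) m fun I => if inB0 I then 1 else 0)) := by
  have hα' : (0:ℝ) ≤ α := hα.le
  have hexp_mono : ∀ x y : ℕ, x ≤ y → Real.exp (-α * ((y:ℤ) : ℝ)) ≤ Real.exp (-α * ((x:ℤ) : ℝ)) := by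
    intro x y hxy
    apply Real.exp_le_exp.mpr
    have : ((x:ℤ) : ℝ) ≤ ((y:ℤ) : ℝ) := by exact_mod_cast hxy
    nlinarith
  constructor
  · -- conditioning on B^+_m
    intro x y hxy
    have hnum : ∀ s : ℤ, Ewalk β s m
        (fun I => Real.exp (-α * (area s I : ℝ)) * (if (∀ k : Fin m, 0 ≤ I k) then 1 else 0))
        = (S14.phiB β α (S14.ind (fun _ => True)) m s).toReal := by
      intro s
      rw [S14.Ewalk_eq hβ s m _
        (fun X => mul_nonneg (Real.exp_pos _).le (by split <;> norm_num))]
      congr 1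
      rw [← S14.bridge hβ α (fun _ : ℤ => True) m s]
      apply tsum_congr
      intro X
      by_cases hc : ∀ k : Fin m, 0 ≤ X k <;> simp [hc]
    have hden : ∀ s : ℤ, Ewalk β s m
        (fun I => if (∀ k : Fin m, 0 ≤ I k) then (1:ℝ) else 0)
        = (S14.phiB β 0 (S14.ind (fun _ => True)) m s).toReal := by
      intro s
      rw [S14.Ewalk_eq hβ s m _ (fun X => by split <;> norm_num)]
      congr 1
      rw [← S14.bridge hβ 0 (fun _ : ℤ => True) m s]
      apply tsum_congr
      intro X
      by_cases hc : ∀ k : Fin m, 0 ≤ X k <;> simp [hc]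
    rw [hnum, hnum, hden, hden]
    have hb1 : ∀ z : ℤ, S14.ind (fun _ : ℤ => True) z ≤ 1 := S14.ind_le_one _
    have hb1' : ∀ z : ℤ, S14.ind (fun _ : ℤ => True) z ≠ 0 := by
      intro z; simp [S14.ind]
    have hkey := S14.mono hβ hα' (S14.ind (fun _ : ℤ => True)) m (x:ℤ) (y:ℤ)
      (by exact_mod_cast hxy)
    have hDxtop := S14.phiB_zero_ne_top hβ hb1 m (x:ℤ)
    have hDytop := S14.phiB_zero_ne_top hβ hb1 m (y:ℤ)
    have hNxtop := S14.phiB_ne_top hβ hα' hb1 m (Int.natCast_nonneg x)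
    have hDx0 := S14.phiB_ne_zero_all (α := 0) hβ hb1' m (x:ℤ)
    have hDy0 := S14.phiB_ne_zero_all (α := 0) hβ hb1' m (y:ℤ)
    rw [div_le_div_iff₀ (ENNReal.toReal_pos hDy0 hDytop) (ENNReal.toReal_pos hDx0 hDxtop)]
    rw [← ENNReal.toReal_mul, ← ENNReal.toReal_mul]
    exact ENNReal.toReal_mono (ENNReal.mul_ne_top hNxtop hDytop) hkey
  · -- conditioning on B^{0,+}_m
    intro x y hxy
    cases m with
    | zero =>
      have harea : ∀ s : ℤ, area s (fun i : Fin 0 => i.elim0) = s := by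
        intro s; simp [area]
      have hB : inB0 (fun i : Fin 0 => i.elim0) := ⟨S14.valx_zero' 0 _, fun k => k.elim0⟩
      rw [S14.Ewalk_zero, S14.Ewalk_zero, S14.Ewalk_zero, S14.Ewalk_zero, harea, harea]
      simp only [if_pos hB, mul_one, div_one]
      exact hexp_mono x y hxy
    | succ n =>
      have hnum : ∀ s : ℤ, Ewalk β s (n+1)
          (fun I => Real.exp (-α * (area s I : ℝ)) * (if inB0 I then 1 else 0))
          = (S14.phiB β α (S14.ind (fun u => u = 0)) (n+1) s).toReal := by
        intro s
        rw [S14.Ewalk_eq hβ s (n+1) _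
          (fun X => mul_nonneg (Real.exp_pos _).le (by split <;> norm_num))]
        congr 1
        rw [← S14.bridge hβ α (fun u : ℤ => u = 0) (n+1) s]
        apply tsum_congr
        intro X
        by_cases hc : inB0 X
        · have h2 := (S14.inB0_iff s X).mp hc
          simp [hc, h2.1, h2.2]
        · have h2 : ¬((∀ k : Fin (n+1), 0 ≤ X k) ∧ valx s X (n+1) = 0) :=
            fun h => hc ((S14.inB0_iff s X).mpr h)
          simp [hc, h2]
      have hden : ∀ s : ℤ, Ewalk β s (n+1)
          (fun I => if inB0 I then (1:ℝ) else 0)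
          = (S14.phiB β 0 (S14.ind (fun u => u = 0)) (n+1) s).toReal := by
        intro s
        rw [S14.Ewalk_eq hβ s (n+1) _ (fun X => by split <;> norm_num)]
        congr 1
        rw [← S14.bridge hβ 0 (fun u : ℤ => u = 0) (n+1) s]
        apply tsum_congr
        intro X
        by_cases hc : inB0 X
        · have h2 := (S14.inB0_iff s X).mp hc
          simp [hc, h2.1, h2.2]
        · have h2 : ¬((∀ k : Fin (n+1), 0 ≤ X k) ∧ valx s X (n+1) = 0) :=
            fun h => hc ((S14.inB0_iff s X).mpr h)
          simp [hc, h2]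
      rw [hnum, hnum, hden, hden]
      have hb1 : ∀ z : ℤ, S14.ind (fun u : ℤ => u = 0) z ≤ 1 := S14.ind_le_one _
      have hb0 : S14.ind (fun u : ℤ => u = 0) 0 ≠ 0 := by simp [S14.ind]
      have hkey := S14.mono hβ hα' (S14.ind (fun u : ℤ => u = 0)) (n+1) (x:ℤ) (y:ℤ)
        (by exact_mod_cast hxy)
      have hDxtop := S14.phiB_zero_ne_top hβ hb1 (n+1) (x:ℤ)
      have hDytop := S14.phiB_zero_ne_top hβ hb1 (n+1) (y:ℤ)
      have hNxtop := S14.phiB_ne_top hβ hα' hb1 (n+1) (Int.natCast_nonneg x)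
      have hDx0 := S14.phiB_ne_zero_succ (α := 0) hβ hb0 n (x:ℤ)
      have hDy0 := S14.phiB_ne_zero_succ (α := 0) hβ hb0 n (y:ℤ)
      rw [div_le_div_iff₀ (ENNReal.toReal_pos hDy0 hDytop) (ENNReal.toReal_pos hDx0 hDxtop)]
      rw [← ENNReal.toReal_mul, ← ENNReal.toReal_mul]
      exact ENNReal.toReal_mono (ENNReal.mul_ne_top hNxtop hDytop) hkey

end
end

section
/- Let β > 0, N ∈ ℕ, and let A ⊆ ℤ^N satisfy P_{β,0}(X ∈ A) > 0 and be closed under coordinatewise minimum and coordinatewise maximum (for all u,v ∈ A, u∧v ∈ A and u∨v ∈ A). Let f,g : A → ℝ be two non-negative bounded functions that are both non-increasing (or both non-decreasing) with respect to the coordinatewise partial order on ℤ^N. Then E_{β,0}[ f(X) g(X) | X ∈ A ] ≥ E_{β,0}[ f(X) | X ∈ A ] · E_{β,0}[ g(X) | X ∈ A ]. -/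
open Filter

attribute [local instance] Classical.propDecidable

noncomputable section

lemma cb_pos' {β : ℝ} (hβ : 0 < β) : 0 < cb β := by
  have h1 : Real.exp (-β / 2) < 1 := by
    rw [Real.exp_lt_one_iff]; linarith
  have h2 : 0 < Real.exp (-β / 2) := Real.exp_pos _
  exact div_pos (by linarith) (by linarith)

lemma pb_nonneg' {β : ℝ} (hβ : 0 < β) (k : ℤ) : 0 ≤ pb β k :=
  div_nonneg (Real.exp_pos _).le (cb_pos' hβ).le

lemma pb_mul_le' {β : ℝ} (hβ : 0 < β) {j1 j2 k1 k2 : ℤ} (h : |j1| + |j2| ≤ |k1| + |k2|) :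
    pb β k1 * pb β k2 ≤ pb β j1 * pb β j2 := by
  unfold pb
  rw [div_mul_div_comm, div_mul_div_comm, ← Real.exp_add, ← Real.exp_add]
  have hD : 0 < cb β * cb β := mul_pos (cb_pos' hβ) (cb_pos' hβ)
  rw [div_le_div_iff₀ hD hD]
  have hR : |(j1 : ℝ)| + |(j2 : ℝ)| ≤ |(k1 : ℝ)| + |(k2 : ℝ)| := by exact_mod_cast h
  have := Real.exp_le_exp.2 (show -(β / 2) * |(k1:ℝ)| + -(β / 2) * |(k2:ℝ)| ≤
      -(β / 2) * |(j1:ℝ)| + -(β / 2) * |(j2:ℝ)| by nlinarith)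
  nlinarith [this, hD]

lemma valx_sup' {n : ℕ} (u v : Fin n → ℤ) (k : ℕ) :
    valx 0 (u ⊔ v) k = max (valx 0 u k) (valx 0 v k) := by
  unfold valx; split_ifs <;> simp [Pi.sup_apply]

lemma valx_inf' {n : ℕ} (u v : Fin n → ℤ) (k : ℕ) :
    valx 0 (u ⊓ v) k = min (valx 0 u k) (valx 0 v k) := by
  unfold valx; split_ifs <;> simp [Pi.inf_apply]

lemma wt_nonneg' {β : ℝ} (hβ : 0 < β) (x : ℤ) {n : ℕ} (X : Fin n → ℤ) : 0 ≤ wt β x X :=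
  Finset.prod_nonneg fun _ _ => pb_nonneg' hβ _

lemma wt_supermod' {β : ℝ} (hβ : 0 < β) {n : ℕ} (u v : Fin n → ℤ) :
    wt β 0 u * wt β 0 v ≤ wt β 0 (u ⊓ v) * wt β 0 (u ⊔ v) := by
  unfold wt
  rw [← Finset.prod_mul_distrib, ← Finset.prod_mul_distrib]
  refine Finset.prod_le_prod (fun k _ => mul_nonneg (pb_nonneg' hβ _) (pb_nonneg' hβ _))
    (fun k _ => ?_)
  rw [valx_inf', valx_inf', valx_sup', valx_sup']
  exact pb_mul_le' hβ (by simp only [abs_eq_max_neg]; omega)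

lemma tsum_four' {ι : Type*} [DistribLattice ι] [DecidableEq ι] (f₁ f₂ f₃ f₄ : ι → ℝ)
    (h₁ : ∀ a, 0 ≤ f₁ a) (h₂ : ∀ a, 0 ≤ f₂ a) (h₃ : ∀ a, 0 ≤ f₃ a) (h₄ : ∀ a, 0 ≤ f₄ a)
    (s₁ : Summable f₁) (s₂ : Summable f₂) (s₃ : Summable f₃) (s₄ : Summable f₄)
    (h : ∀ a b, f₁ a * f₂ b ≤ f₃ (a ⊓ b) * f₄ (a ⊔ b)) :
    (∑' a, f₁ a) * ∑' a, f₂ a ≤ (∑' a, f₃ a) * ∑' a, f₄ a := by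
  have key : ∀ s : Finset ι, (∑ a ∈ s, f₁ a) * ∑ a ∈ s, f₂ a ≤ (∑' a, f₃ a) * ∑' a, f₄ a := by
    intro s
    refine (four_functions_theorem f₁ f₂ f₃ f₄ h₁ h₂ h₃ h₄ h s s).trans ?_
    exact mul_le_mul (Summable.sum_le_tsum _ (fun i _ => h₃ i) s₃) (Summable.sum_le_tsum _ (fun i _ => h₄ i) s₄)
      (Finset.sum_nonneg fun i _ => h₄ i) (tsum_nonneg h₃)
  have t1 : Filter.Tendsto (fun s : Finset ι => ∑ a ∈ s, f₁ a) atTop (nhds (∑' a, f₁ a)) :=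
    s₁.hasSum
  have t2 : Filter.Tendsto (fun s : Finset ι => ∑ a ∈ s, f₂ a) atTop (nhds (∑' a, f₂ a)) :=
    s₂.hasSum
  exact le_of_tendsto (t1.mul t2) (Filter.Eventually.of_forall key)

/-- a conditional FKG inequality for the random walk with step law `P_β`,
on a set `A ⊆ ℤ^N` closed under coordinatewise min and max, for two non-negative
bounded functions that are both non-increasing or both non-decreasing on `A`. -/
theorem statement16 (β : ℝ) (hβ : 0 < β) (N : ℕ) (A : Set (Fin N → ℤ))
    (f g : (Fin N → ℤ) → ℝ)
    (hPA : 0 < Ewalk β 0 N fun X => if X ∈ A then 1 else 0)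
    (hmin : ∀ u ∈ A, ∀ v ∈ A, (fun k => min (u k) (v k)) ∈ A)
    (hmax : ∀ u ∈ A, ∀ v ∈ A, (fun k => max (u k) (v k)) ∈ A)
    (hf0 : ∀ u ∈ A, 0 ≤ f u) (hg0 : ∀ u ∈ A, 0 ≤ g u)
    (hfbd : ∃ M : ℝ, ∀ u ∈ A, f u ≤ M) (hgbd : ∃ M : ℝ, ∀ u ∈ A, g u ≤ M)
    (hmono : (∀ u ∈ A, ∀ v ∈ A, u ≤ v → f v ≤ f u ∧ g v ≤ g u) ∨
             (∀ u ∈ A, ∀ v ∈ A, u ≤ v → f u ≤ f v ∧ g u ≤ g v)) :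
    (Ewalk β 0 N fun X => if X ∈ A then f X else 0) /
        (Ewalk β 0 N fun X => if X ∈ A then 1 else 0) *
      ((Ewalk β 0 N fun X => if X ∈ A then g X else 0) /
        (Ewalk β 0 N fun X => if X ∈ A then 1 else 0)) ≤
    (Ewalk β 0 N fun X => if X ∈ A then f X * g X else 0) /
      (Ewalk β 0 N fun X => if X ∈ A then 1 else 0) := by
  classical
  obtain ⟨Mf, hMf⟩ := hfbd
  obtain ⟨Mg, hMg⟩ := hgbd
  set F : (Fin N → ℤ) → ℝ := fun X => (if X ∈ A then f X else 0) * wt β 0 X with hFdef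
  set G : (Fin N → ℤ) → ℝ := fun X => (if X ∈ A then g X else 0) * wt β 0 X with hGdef
  set H : (Fin N → ℤ) → ℝ := fun X => (if X ∈ A then f X * g X else 0) * wt β 0 X with hHdef
  set I : (Fin N → ℤ) → ℝ := fun X => (if X ∈ A then (1:ℝ) else 0) * wt β 0 X with hIdef
  have eqF : (Ewalk β 0 N fun X => if X ∈ A then f X else 0) = ∑' X, F X := by rw [hFdef]; rfl
  have eqG : (Ewalk β 0 N fun X => if X ∈ A then g X else 0) = ∑' X, G X := by rw [hGdef]; rfl
  have eqH : (Ewalk β 0 N fun X => if X ∈ A then f X * g X else 0) = ∑' X, H X := by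
    rw [hHdef]; rfl
  have eqI : (Ewalk β 0 N fun X => if X ∈ A then (1:ℝ) else 0) = ∑' X, I X := by rw [hIdef]; rfl
  have hw0 : ∀ X : Fin N → ℤ, 0 ≤ wt β 0 X := fun X => wt_nonneg' hβ 0 X
  have hI0 : ∀ X, 0 ≤ I X := fun X => mul_nonneg (by split_ifs <;> norm_num) (hw0 X)
  have hF0 : ∀ X, 0 ≤ F X := fun X => mul_nonneg
    (by split_ifs with h; exacts [hf0 X h, le_refl 0]) (hw0 X)
  have hG0 : ∀ X, 0 ≤ G X := fun X => mul_nonneg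
    (by split_ifs with h; exacts [hg0 X h, le_refl 0]) (hw0 X)
  have hH0 : ∀ X, 0 ≤ H X := fun X => mul_nonneg
    (by split_ifs with h; exacts [mul_nonneg (hf0 X h) (hg0 X h), le_refl 0]) (hw0 X)
  have hd : 0 < ∑' X, I X := by rw [← eqI]; exact hPA
  have hsI : Summable I := by
    by_contra hs
    rw [tsum_eq_zero_of_not_summable hs] at hd
    exact lt_irrefl 0 hd
  have hMf0 : (0:ℝ) ≤ max Mf 0 := le_max_right _ _
  have hMg0 : (0:ℝ) ≤ max Mg 0 := le_max_right _ _
  have hFle : ∀ X, F X ≤ max Mf 0 * I X := by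
    intro X
    by_cases hX : X ∈ A
    · simp only [hFdef, hIdef, if_pos hX, mul_one, one_mul, ← mul_assoc]
      exact mul_le_mul_of_nonneg_right ((hMf X hX).trans (le_max_left _ _)) (hw0 X)
    · simp [hFdef, hIdef, if_neg hX]
  have hGle : ∀ X, G X ≤ max Mg 0 * I X := by
    intro X
    by_cases hX : X ∈ A
    · simp only [hGdef, hIdef, if_pos hX, mul_one, one_mul, ← mul_assoc]
      exact mul_le_mul_of_nonneg_right ((hMg X hX).trans (le_max_left _ _)) (hw0 X)
    · simp [hGdef, hIdef, if_neg hX]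
  have hHle : ∀ X, H X ≤ (max Mf 0 * max Mg 0) * I X := by
    intro X
    by_cases hX : X ∈ A
    · simp only [hHdef, hIdef, if_pos hX, mul_one, one_mul, ← mul_assoc]
      refine mul_le_mul_of_nonneg_right ?_ (hw0 X)
      exact mul_le_mul ((hMf X hX).trans (le_max_left _ _))
        ((hMg X hX).trans (le_max_left _ _)) (hg0 X hX) hMf0
    · simp [hHdef, hIdef, if_neg hX]
  have hsF : Summable F := Summable.of_nonneg_of_le hF0 hFle (hsI.mul_left _)
  have hsG : Summable G := Summable.of_nonneg_of_le hG0 hGle (hsI.mul_left _)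
  have hsH : Summable H := Summable.of_nonneg_of_le hH0 hHle (hsI.mul_left _)
  have hsupA : ∀ u ∈ A, ∀ v ∈ A, u ⊔ v ∈ A := by
    intro u hu v hv
    have h1 := hmax u hu v hv
    have he : (fun k => max (u k) (v k)) = u ⊔ v := by
      funext k; simp [Pi.sup_apply]
    rwa [he] at h1
  have hinfA : ∀ u ∈ A, ∀ v ∈ A, u ⊓ v ∈ A := by
    intro u hu v hv
    have h1 := hmin u hu v hv
    have he : (fun k => min (u k) (v k)) = u ⊓ v := by
      funext k; simp [Pi.inf_apply]
    rwa [he] at h1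
  have key : (∑' X, F X) * (∑' X, G X) ≤ (∑' X, H X) * (∑' X, I X) := by
    rcases hmono with hdec | hinc
    · refine tsum_four' F G H I hF0 hG0 hH0 hI0 hsF hsG hsH hsI ?_
      intro a b
      by_cases ha : a ∈ A
      · by_cases hb : b ∈ A
        · have hiA : a ⊓ b ∈ A := hinfA a ha b hb
          have hsA : a ⊔ b ∈ A := hsupA a ha b hb
          simp only [hFdef, hGdef, hHdef, hIdef, if_pos ha, if_pos hb, if_pos hiA, if_pos hsA]
          have h1 : f a * g b ≤ f (a ⊓ b) * g (a ⊓ b) :=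
            mul_le_mul (hdec (a ⊓ b) hiA a ha inf_le_left).1
              (hdec (a ⊓ b) hiA b hb inf_le_right).2 (hg0 b hb) (hf0 _ hiA)
          have h2 := wt_supermod' hβ a b
          calc f a * wt β 0 a * (g b * wt β 0 b)
              = (f a * g b) * (wt β 0 a * wt β 0 b) := by ring
            _ ≤ (f (a ⊓ b) * g (a ⊓ b)) * (wt β 0 (a ⊓ b) * wt β 0 (a ⊔ b)) :=
                mul_le_mul h1 h2 (mul_nonneg (hw0 a) (hw0 b))
                  (mul_nonneg (hf0 _ hiA) (hg0 _ hiA))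
            _ = f (a ⊓ b) * g (a ⊓ b) * wt β 0 (a ⊓ b) * (1 * wt β 0 (a ⊔ b)) := by ring
        · have : G b = 0 := by simp [hGdef, if_neg hb]
          rw [this, mul_zero]
          exact mul_nonneg (hH0 _) (hI0 _)
      · have : F a = 0 := by simp [hFdef, if_neg ha]
        rw [this, zero_mul]
        exact mul_nonneg (hH0 _) (hI0 _)
    · have h4 := tsum_four' F G I H hF0 hG0 hI0 hH0 hsF hsG hsI hsH ?_
      · linarith [h4]
      intro a b
      by_cases ha : a ∈ A
      · by_cases hb : b ∈ A
        · have hiA : a ⊓ b ∈ A := hinfA a ha b hb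
          have hsA : a ⊔ b ∈ A := hsupA a ha b hb
          simp only [hFdef, hGdef, hHdef, hIdef, if_pos ha, if_pos hb, if_pos hiA, if_pos hsA]
          have h1 : f a * g b ≤ f (a ⊔ b) * g (a ⊔ b) :=
            mul_le_mul (hinc a ha (a ⊔ b) hsA le_sup_left).1
              (hinc b hb (a ⊔ b) hsA le_sup_right).2 (hg0 b hb) (hf0 _ hsA)
          have h2 := wt_supermod' hβ a b
          calc f a * wt β 0 a * (g b * wt β 0 b)
              = (f a * g b) * (wt β 0 a * wt β 0 b) := by ring
            _ ≤ (f (a ⊔ b) * g (a ⊔ b)) * (wt β 0 (a ⊓ b) * wt β 0 (a ⊔ b)) :=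
                mul_le_mul h1 h2 (mul_nonneg (hw0 a) (hw0 b))
                  (mul_nonneg (hf0 _ hsA) (hg0 _ hsA))
            _ = 1 * wt β 0 (a ⊓ b) * (f (a ⊔ b) * g (a ⊔ b) * wt β 0 (a ⊔ b)) := by ring
        · have : G b = 0 := by simp [hGdef, if_neg hb]
          rw [this, mul_zero]
          exact mul_nonneg (hI0 _) (hH0 _)
      · have : F a = 0 := by simp [hFdef, if_neg ha]
        rw [this, zero_mul]
        exact mul_nonneg (hI0 _) (hH0 _)
  rw [eqF, eqG, eqH, eqI, div_mul_div_comm, div_le_div_iff₀ (mul_pos hd hd) hd]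
  nlinarith [mul_le_mul_of_nonneg_right key hd.le]


end
end

section
/- For every β > 0 and δ ≥ 0: (i) the constrained partition function is supermultiplicative, i.e. Z^{+,c}_{L_1+L_2,β,δ} ≥ Z^{+,c}_{L_1,β,δ} · Z^{+,c}_{L_2,β,δ} for all L_1, L_2 ≥ 1; (ii) for every L ≥ 1, (1/L²)·(Z^+_{L,β,δ})² ≤ Z^{+,c}_{2L,β,δ} ≤ Z^+_{2L,β,δ}. -/
open Filter

attribute [local instance] Classical.propDecidable

noncomputable section

/-- The partial sum `Σ_{i=1}^k ℓ_i`. -/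
def psum {n : ℕ} (ℓ : Fin n → ℤ) (k : ℕ) : ℤ :=
  ∑ i ∈ Finset.univ.filter (fun i : Fin n => (i : ℕ) < k), ℓ i

/-- `ℓ_i` for `1 ≤ i ≤ n`, with the convention `ℓ_0 = ℓ_{n+1} = 0`. -/
def lext {n : ℕ} (ℓ : Fin n → ℤ) (i : ℕ) : ℤ :=
  if h : 1 ≤ i ∧ i ≤ n then ℓ ⟨i - 1, by omega⟩ else 0

/-- `x ∧~ y := min(|x|,|y|)·1{xy ≤ 0}`. -/
def twedge (x y : ℤ) : ℤ := if x * y ≤ 0 then min |x| |y| else 0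

/-- The Hamiltonian `H(ℓ) = β Σ_{i=0}^n ℓ_i ∧~ ℓ_{i+1} + δ Σ_{k=1}^n 1{Σ_{i=1}^k ℓ_i = 0}`. -/
def Ham (β δ : ℝ) {n : ℕ} (ℓ : Fin n → ℤ) : ℝ :=
  β * ((∑ i ∈ Finset.range (n + 1), twedge (lext ℓ i) (lext ℓ (i + 1)) : ℤ) : ℝ) +
    δ * ((((Finset.Icc 1 n).filter (fun k => psum ℓ k = 0)).card : ℕ) : ℝ)

/-- The number of contacts with the wall, `Σ_{k=1}^n 1{Σ_{i=1}^k ℓ_i = 0}`. -/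
def contacts {n : ℕ} (ℓ : Fin n → ℤ) : ℕ :=
  ((Finset.Icc 1 n).filter (fun k => psum ℓ k = 0)).card

/-- Membership in `L^+_{N,L}`. -/
def inConf (L N : ℕ) (ℓ : Fin N → ℤ) : Prop :=
  (∑ i, |ℓ i|) = (L : ℤ) - (N : ℤ) ∧ ∀ k : Fin N, 0 ≤ psum ℓ ((k : ℕ) + 1)

/-- The (free) partition function `Z^+_{L,β,δ}`. -/
def Zplus (β δ : ℝ) (L : ℕ) : ℝ :=
  ∑ N ∈ Finset.Icc 1 L, ∑' ℓ : Fin N → ℤ,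
    if inConf L N ℓ then Real.exp (Ham β δ ℓ) else 0

/-- The constrained partition function `Z^{+,c}_{L,β,δ}`. -/
def Zplusc (β δ : ℝ) (L : ℕ) : ℝ :=
  ∑ N ∈ Finset.Icc 1 L, ∑' ℓ : Fin N → ℤ,
    if inConf L N ℓ ∧ psum ℓ N = 0 then Real.exp (Ham β δ ℓ) else 0

/-! ### Auxiliary development for Statement 18 -/

section Aux18

/-- Concatenation of two configurations. -/
def cat {m n : ℕ} (f : Fin m → ℤ) (g : Fin n → ℤ) : Fin (m + n) → ℤ :=
  fun i => if h : (i : ℕ) < m then f ⟨i, h⟩ else g ⟨(i : ℕ) - m, by omega⟩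

/-- Negated reversal of a configuration. -/
def nrev {n : ℕ} (f : Fin n → ℤ) : Fin n → ℤ := fun i => -f ⟨n - 1 - (i : ℕ), by omega⟩

lemma twedge_nonneg (x y : ℤ) : 0 ≤ twedge x y := by
  unfold twedge; split
  · exact le_min (abs_nonneg x) (abs_nonneg y)
  · exact le_rfl

lemma twedge_zero_right (x : ℤ) : twedge x 0 = 0 := by simp [twedge]

lemma twedge_zero_left (y : ℤ) : twedge 0 y = 0 := by simp [twedge]

lemma twedge_neg_neg (x y : ℤ) : twedge (-x) (-y) = twedge x y := by
  unfold twedge; rw [neg_mul_neg, abs_neg, abs_neg]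

lemma twedge_comm (x y : ℤ) : twedge x y = twedge y x := by
  unfold twedge; rw [mul_comm, min_comm]

lemma lext_zero {n : ℕ} (ℓ : Fin n → ℤ) : lext ℓ 0 = 0 := by simp [lext]

lemma lext_of_gt {n : ℕ} (ℓ : Fin n → ℤ) {i : ℕ} (h : n < i) : lext ℓ i = 0 := by
  rw [lext, dif_neg]; omega

lemma lext_cat {m n : ℕ} (f : Fin m → ℤ) (g : Fin n → ℤ) (i : ℕ) :
    lext (cat f g) i = if i ≤ m then lext f i else lext g (i - m) := by
  rcases le_or_gt i m with him | him
  · rw [if_pos him]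
    rcases Nat.eq_zero_or_pos i with rfl | hi
    · rw [lext_zero, lext_zero]
    · rw [lext, dif_pos ⟨hi, by omega⟩, lext, dif_pos ⟨hi, him⟩]
      exact dif_pos (show i - 1 < m by omega)
  · rw [if_neg (by omega)]
    rcases le_or_gt i (m + n) with h | h
    · rw [lext, dif_pos ⟨by omega, h⟩, lext, dif_pos ⟨by omega, by omega⟩]
      refine (dif_neg (show ¬ i - 1 < m by omega)).trans ?_
      exact congrArg g (Fin.ext (show i - 1 - m = i - m - 1 by omega))
    · rw [lext_of_gt _ h, lext_of_gt _ (by omega)]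

lemma lext_nrev {n : ℕ} (ℓ : Fin n → ℤ) (i : ℕ) : lext (nrev ℓ) i = -lext ℓ (n + 1 - i) := by
  rcases Nat.eq_zero_or_pos i with rfl | hi
  · rw [lext_zero, lext_of_gt _ (by omega), neg_zero]
  · rcases le_or_gt i n with hin | hin
    · rw [lext, dif_pos ⟨hi, hin⟩, lext, dif_pos ⟨by omega, by omega⟩]
      exact congrArg (fun x => -ℓ x) (Fin.ext (show n - 1 - (i - 1) = n + 1 - i - 1 by omega))
    · rw [lext_of_gt _ hin]
      have e : n + 1 - i = 0 := by omega
      rw [e, lext_zero, neg_zero]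

lemma psum_zero {n : ℕ} (ℓ : Fin n → ℤ) : psum ℓ 0 = 0 := by simp [psum]

lemma psum_succ {n : ℕ} (ℓ : Fin n → ℤ) (k : ℕ) :
    psum ℓ (k + 1) = psum ℓ k + lext ℓ (k + 1) := by
  rcases lt_or_ge k n with h | h
  · have hins : (Finset.univ.filter fun i : Fin n => (i : ℕ) < k + 1)
        = insert (⟨k, h⟩ : Fin n) (Finset.univ.filter fun i : Fin n => (i : ℕ) < k) := by
      ext i
      simp only [Finset.mem_filter, Finset.mem_insert, Finset.mem_univ, true_and, Fin.ext_iff]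
      omega
    rw [psum, psum, hins, Finset.sum_insert (by simp), add_comm]
    congr 1
    rw [lext, dif_pos ⟨by omega, by omega⟩]
    exact congrArg ℓ (Fin.ext rfl)
  · have heq : (Finset.univ.filter fun i : Fin n => (i : ℕ) < k + 1)
        = Finset.univ.filter fun i : Fin n => (i : ℕ) < k := by
      ext i
      simp only [Finset.mem_filter, Finset.mem_univ, true_and]
      have := i.isLt
      omega
    rw [psum, psum, heq, lext_of_gt _ (by omega), add_zero]

lemma psum_eq {n : ℕ} (ℓ : Fin n → ℤ) (k : ℕ) :
    psum ℓ k = ∑ i ∈ Finset.range k, lext ℓ (i + 1) := by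
  induction k with
  | zero => rw [psum_zero]; simp
  | succ k ih => rw [Finset.sum_range_succ, psum_succ, ih]

lemma psum_top {n : ℕ} (ℓ : Fin n → ℤ) : psum ℓ n = ∑ i, ℓ i := by
  rw [psum]
  congr 1
  apply Finset.filter_true_of_mem
  exact fun i _ => i.isLt

lemma lext_abs {n : ℕ} (ℓ : Fin n → ℤ) (j : ℕ) : lext (fun i => |ℓ i|) j = |lext ℓ j| := by
  unfold lext
  split
  · rfl
  · rw [abs_zero]

lemma abs_sum_eq {n : ℕ} (ℓ : Fin n → ℤ) :
    (∑ i, |ℓ i|) = ∑ i ∈ Finset.range n, |lext ℓ (i + 1)| := by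
  have h1 : (∑ i, |ℓ i|) = psum (fun i => |ℓ i|) n := (psum_top _).symm
  rw [h1, psum_eq]
  exact Finset.sum_congr rfl fun i _ => lext_abs ℓ (i + 1)

lemma psum_cat_le {m n : ℕ} (f : Fin m → ℤ) (g : Fin n → ℤ) {k : ℕ} (hk : k ≤ m) :
    psum (cat f g) k = psum f k := by
  rw [psum_eq, psum_eq]
  refine Finset.sum_congr rfl fun i hi => ?_
  rw [lext_cat, if_pos (by have := Finset.mem_range.mp hi; omega)]

lemma psum_cat_add {m n : ℕ} (f : Fin m → ℤ) (g : Fin n → ℤ) (j : ℕ) :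
    psum (cat f g) (m + j) = psum f m + psum g j := by
  rw [psum_eq, Finset.sum_range_add]
  congr 1
  · rw [psum_eq]
    refine Finset.sum_congr rfl fun i hi => ?_
    rw [lext_cat, if_pos (by have := Finset.mem_range.mp hi; omega)]
  · rw [psum_eq]
    refine Finset.sum_congr rfl fun i _ => ?_
    rw [lext_cat, if_neg (by omega)]
    congr 1
    omega

lemma psum_nrev {n : ℕ} (ℓ : Fin n → ℤ) {k : ℕ} (hk : k ≤ n) :
    psum (nrev ℓ) k = psum ℓ (n - k) - psum ℓ n := by
  have e : n - k + k = n := by omega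
  have h1 := Finset.sum_range_add (fun i => lext ℓ (i + 1)) (n - k) k
  rw [e] at h1
  have h2 : psum (nrev ℓ) k = -∑ i ∈ Finset.range k, lext ℓ (n - i) := by
    rw [psum_eq, ← Finset.sum_neg_distrib]
    refine Finset.sum_congr rfl fun i _ => ?_
    rw [lext_nrev]
    have e' : n + 1 - (i + 1) = n - i := by omega
    rw [e']
  have h3 : (∑ i ∈ Finset.range k, lext ℓ (n - i))
      = ∑ j ∈ Finset.range k, lext ℓ (n - k + j + 1) := by
    rw [← Finset.sum_range_reflect (fun j => lext ℓ (n - k + j + 1)) k]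
    refine Finset.sum_congr rfl fun i hi => ?_
    have := Finset.mem_range.mp hi
    congr 1
    omega
  rw [h2, h3, psum_eq ℓ (n - k), psum_eq ℓ n, h1]
  ring

/-- The twedge part of the Hamiltonian. -/
def tws {n : ℕ} (ℓ : Fin n → ℤ) : ℤ :=
  ∑ i ∈ Finset.range (n + 1), twedge (lext ℓ i) (lext ℓ (i + 1))

lemma Ham_eq (β δ : ℝ) {n : ℕ} (ℓ : Fin n → ℤ) :
    Ham β δ ℓ = β * (tws ℓ : ℝ) + δ * (contacts ℓ : ℝ) := rfl

lemma tws_nrev {n : ℕ} (ℓ : Fin n → ℤ) : tws (nrev ℓ) = tws ℓ := by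
  unfold tws
  rw [← Finset.sum_range_reflect (fun i => twedge (lext ℓ i) (lext ℓ (i + 1))) (n + 1)]
  refine Finset.sum_congr rfl fun i hi => ?_
  have hi' := Finset.mem_range.mp hi
  rw [lext_nrev, lext_nrev, twedge_neg_neg, twedge_comm]
  have e1 : n + 1 - (i + 1) = n + 1 - 1 - i := by omega
  have e2 : n + 1 - i = n + 1 - 1 - i + 1 := by omega
  rw [e1, e2]

lemma tws_cat_ge {m n : ℕ} (f : Fin m → ℤ) (g : Fin n → ℤ) :
    tws f + tws g ≤ tws (cat f g) := by
  have e : m + n + 1 = m + (n + 1) := by omega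
  have hF : ∀ i ∈ Finset.range m,
      twedge (lext (cat f g) i) (lext (cat f g) (i + 1))
        = twedge (lext f i) (lext f (i + 1)) := by
    intro i hi
    have := Finset.mem_range.mp hi
    rw [lext_cat, if_pos (by omega), lext_cat, if_pos (by omega)]
  have hG : ∀ j ∈ Finset.range n,
      twedge (lext (cat f g) (m + (j + 1))) (lext (cat f g) (m + (j + 1) + 1))
        = twedge (lext g (j + 1)) (lext g (j + 1 + 1)) := by
    intro j _
    rw [lext_cat, if_neg (by omega), lext_cat, if_neg (by omega)]
    have e1 : m + (j + 1) - m = j + 1 := by omega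
    have e2 : m + (j + 1) + 1 - m = j + 1 + 1 := by omega
    rw [e1, e2]
  have h1 : tws (cat f g) = (∑ i ∈ Finset.range m, twedge (lext f i) (lext f (i + 1)))
      + (twedge (lext (cat f g) (m + 0)) (lext (cat f g) (m + 0 + 1))
        + ∑ j ∈ Finset.range n, twedge (lext g (j + 1)) (lext g (j + 1 + 1))) := by
    unfold tws
    rw [e, Finset.sum_range_add, Finset.sum_range_succ']
    rw [Finset.sum_congr rfl hF, Finset.sum_congr rfl hG]
    ring
  have h2 : tws f = ∑ i ∈ Finset.range m, twedge (lext f i) (lext f (i + 1)) := by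
    unfold tws
    rw [Finset.sum_range_succ, lext_of_gt f (Nat.lt_succ_self m), twedge_zero_right, add_zero]
  have h3 : tws g = ∑ j ∈ Finset.range n, twedge (lext g (j + 1)) (lext g (j + 1 + 1)) := by
    unfold tws
    rw [Finset.sum_range_succ', lext_zero, twedge_zero_left, add_zero]
  have h4 := twedge_nonneg (lext (cat f g) (m + 0)) (lext (cat f g) (m + 0 + 1))
  rw [h1, ← h2, ← h3]
  linarith

lemma contacts_cat_zero {m n : ℕ} (f : Fin m → ℤ) (g : Fin n → ℤ) (hf : psum f m = 0) :
    contacts f + contacts g ≤ contacts (cat f g) := by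
  classical
  set A := (Finset.Icc 1 m).filter (fun k => psum f k = 0) with hA
  set B := ((Finset.Icc 1 n).filter (fun k => psum g k = 0)).image (fun k => m + k) with hB
  have hdisj : Disjoint A B := by
    rw [Finset.disjoint_left]
    intro k hkA hkB
    simp only [hA, Finset.mem_filter, Finset.mem_Icc] at hkA
    simp only [hB, Finset.mem_image, Finset.mem_filter, Finset.mem_Icc] at hkB
    obtain ⟨j, ⟨⟨hj1, _⟩, _⟩, rfl⟩ := hkB
    omega
  have hsub : A ∪ B ⊆ (Finset.Icc 1 (m + n)).filter (fun k => psum (cat f g) k = 0) := by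
    intro k hk
    rcases Finset.mem_union.mp hk with hk | hk
    · simp only [hA, Finset.mem_filter, Finset.mem_Icc] at hk
      simp only [Finset.mem_filter, Finset.mem_Icc]
      exact ⟨⟨hk.1.1, by omega⟩, by rw [psum_cat_le f g hk.1.2]; exact hk.2⟩
    · simp only [hB, Finset.mem_image, Finset.mem_filter, Finset.mem_Icc] at hk
      obtain ⟨j, ⟨⟨hj1, hj2⟩, hj0⟩, rfl⟩ := hk
      simp only [Finset.mem_filter, Finset.mem_Icc]
      exact ⟨⟨by omega, by omega⟩, by rw [psum_cat_add, hf, hj0, add_zero]⟩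
  have hBcard : B.card = contacts g := by
    rw [hB, Finset.card_image_of_injective _ (add_right_injective m)]
    rfl
  calc contacts f + contacts g = A.card + B.card := by rw [hBcard]; rfl
    _ = (A ∪ B).card := (Finset.card_union_of_disjoint hdisj).symm
    _ ≤ _ := Finset.card_le_card hsub

lemma contacts_cat_nrev {m n : ℕ} (f : Fin m → ℤ) (g : Fin n → ℤ) (hn : 1 ≤ n)
    (hfg : psum f m = psum g n) :
    contacts f + contacts g ≤ contacts (cat f (nrev g)) := by
  classical
  have key : ∀ k ≤ n, psum (cat f (nrev g)) (m + k) = psum g (n - k) := by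
    intro k hk
    rw [psum_cat_add, psum_nrev g hk, hfg]
    ring
  set A := (Finset.Icc 1 m).filter (fun k => psum f k = 0) with hA
  set φ : ℕ → ℕ := fun j => if j = n then m + n else m + (n - j) with hφ
  set B := ((Finset.Icc 1 n).filter (fun k => psum g k = 0)).image φ with hB
  have hφlarge : ∀ j, 1 ≤ j → j ≤ n → m + 1 ≤ φ j := by
    intro j h1 h2
    simp only [hφ]
    split <;> omega
  have hdisj : Disjoint A B := by
    rw [Finset.disjoint_left]
    intro k hkA hkB
    simp only [hA, Finset.mem_filter, Finset.mem_Icc] at hkA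
    simp only [hB, Finset.mem_image, Finset.mem_filter, Finset.mem_Icc] at hkB
    obtain ⟨j, ⟨⟨hj1, hj2⟩, _⟩, rfl⟩ := hkB
    have := hφlarge j hj1 hj2
    omega
  have hsub : A ∪ B ⊆ (Finset.Icc 1 (m + n)).filter (fun k => psum (cat f (nrev g)) k = 0) := by
    intro k hk
    rcases Finset.mem_union.mp hk with hk | hk
    · simp only [hA, Finset.mem_filter, Finset.mem_Icc] at hk
      simp only [Finset.mem_filter, Finset.mem_Icc]
      exact ⟨⟨hk.1.1, by omega⟩, by rw [psum_cat_le f (nrev g) hk.1.2]; exact hk.2⟩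
    · simp only [hB, Finset.mem_image, Finset.mem_filter, Finset.mem_Icc] at hk
      obtain ⟨j, ⟨⟨hj1, hj2⟩, hj0⟩, rfl⟩ := hk
      simp only [Finset.mem_filter, Finset.mem_Icc]
      refine ⟨⟨by have := hφlarge j hj1 hj2; omega, ?_⟩, ?_⟩
      · simp only [hφ]; split <;> omega
      · simp only [hφ]
        by_cases hjn : j = n
        · rw [if_pos hjn, key n le_rfl, Nat.sub_self, psum_zero]
        · rw [if_neg hjn, key (n - j) (by omega)]
          have : n - (n - j) = j := by omega
          rw [this, hj0]
  have hBcard : B.card = contacts g := by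
    rw [hB, Finset.card_image_of_injOn]
    · rfl
    · intro x hx y hy hxy
      simp only [Finset.coe_filter, Set.mem_setOf_eq, Finset.mem_Icc] at hx hy
      simp only [hφ] at hxy
      split_ifs at hxy <;> omega
  calc contacts f + contacts g = A.card + B.card := by rw [hBcard]; rfl
    _ = (A ∪ B).card := (Finset.card_union_of_disjoint hdisj).symm
    _ ≤ _ := Finset.card_le_card hsub

lemma abs_sum_cat {m n : ℕ} (f : Fin m → ℤ) (g : Fin n → ℤ) :
    (∑ i, |cat f g i|) = (∑ i, |f i|) + ∑ i, |g i| := by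
  rw [abs_sum_eq, abs_sum_eq, abs_sum_eq, Finset.sum_range_add]
  congr 1
  · refine Finset.sum_congr rfl fun i hi => ?_
    rw [lext_cat, if_pos (by have := Finset.mem_range.mp hi; omega)]
  · refine Finset.sum_congr rfl fun i _ => ?_
    rw [lext_cat, if_neg (by omega)]
    congr 2
    omega

lemma abs_sum_nrev {n : ℕ} (g : Fin n → ℤ) : (∑ i, |nrev g i|) = ∑ i, |g i| := by
  rw [abs_sum_eq, abs_sum_eq]
  rw [← Finset.sum_range_reflect (fun i => |lext g (i + 1)|) n]
  refine Finset.sum_congr rfl fun i hi => ?_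
  have := Finset.mem_range.mp hi
  rw [lext_nrev, abs_neg]
  congr 2
  omega

lemma nn_of_inConf {L N : ℕ} {ℓ : Fin N → ℤ} (h : inConf L N ℓ) :
    ∀ k, 1 ≤ k → k ≤ N → 0 ≤ psum ℓ k := by
  intro k h1 h2
  have h3 := h.2 ⟨k - 1, by omega⟩
  have e : ((⟨k - 1, by omega⟩ : Fin N) : ℕ) + 1 = k := by
    simp only []
    omega
  rwa [e] at h3

lemma inConf_cat {L₁ L₂ N₁ N₂ : ℕ} {f : Fin N₁ → ℤ} {g : Fin N₂ → ℤ}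
    (h1 : inConf L₁ N₁ f) (h2 : inConf L₂ N₂ g) (hz1 : psum f N₁ = 0) (hz2 : psum g N₂ = 0) :
    inConf (L₁ + L₂) (N₁ + N₂) (cat f g) ∧ psum (cat f g) (N₁ + N₂) = 0 := by
  refine ⟨⟨?_, ?_⟩, ?_⟩
  · rw [abs_sum_cat, h1.1, h2.1]
    push_cast
    ring
  · intro k
    rcases le_or_gt ((k : ℕ) + 1) N₁ with hk | hk
    · rw [psum_cat_le f g hk]
      exact nn_of_inConf h1 _ (by omega) hk
    · have e : (k : ℕ) + 1 = N₁ + ((k : ℕ) + 1 - N₁) := by omega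
      rw [e, psum_cat_add, hz1, zero_add]
      exact nn_of_inConf h2 _ (by omega) (by have := k.isLt; omega)
  · rw [psum_cat_add, hz1, hz2, add_zero]

lemma inConf_cat_nrev {L N₁ N₂ : ℕ} {f : Fin N₁ → ℤ} {g : Fin N₂ → ℤ}
    (h1 : inConf L N₁ f) (h2 : inConf L N₂ g) (ha : psum f N₁ = psum g N₂) :
    inConf (L + L) (N₁ + N₂) (cat f (nrev g)) ∧ psum (cat f (nrev g)) (N₁ + N₂) = 0 := by
  have key : ∀ k ≤ N₂, psum (cat f (nrev g)) (N₁ + k) = psum g (N₂ - k) := by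
    intro k hk
    rw [psum_cat_add, psum_nrev g hk, ha]
    ring
  refine ⟨⟨?_, ?_⟩, ?_⟩
  · rw [abs_sum_cat, abs_sum_nrev, h1.1, h2.1]
    push_cast
    ring
  · intro k
    rcases le_or_gt ((k : ℕ) + 1) N₁ with hk | hk
    · rw [psum_cat_le _ _ hk]
      exact nn_of_inConf h1 _ (by omega) hk
    · have e : (k : ℕ) + 1 = N₁ + ((k : ℕ) + 1 - N₁) := by omega
      rw [e, key _ (by have := k.isLt; omega)]
      rcases Nat.eq_zero_or_pos (N₂ - ((k : ℕ) + 1 - N₁)) with h0 | h0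
      · rw [h0, psum_zero]
      · exact nn_of_inConf h2 _ (by omega) (by omega)
  · rw [key N₂ le_rfl, Nat.sub_self, psum_zero]

lemma Ham_add_le {β δ : ℝ} (hβ : 0 ≤ β) (hδ : 0 ≤ δ) {a b c : ℕ}
    {x : Fin a → ℤ} {y : Fin b → ℤ} {z : Fin c → ℤ}
    (h1 : tws x + tws y ≤ tws z) (h2 : contacts x + contacts y ≤ contacts z) :
    Ham β δ x + Ham β δ y ≤ Ham β δ z := by
  rw [Ham_eq, Ham_eq, Ham_eq]
  have c1 : ((tws x : ℝ) + (tws y : ℝ)) ≤ (tws z : ℝ) := by exact_mod_cast h1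
  have c2 : ((contacts x : ℝ) + (contacts y : ℝ)) ≤ (contacts z : ℝ) := by exact_mod_cast h2
  have d1 := mul_le_mul_of_nonneg_left c1 hβ
  have d2 := mul_le_mul_of_nonneg_left c2 hδ
  rw [mul_add] at d1 d2
  linarith

/-- The size function used to recover the splitting point. -/
def msize (q : Σ N : ℕ, (Fin N → ℤ)) (k : ℕ) : ℤ :=
  (k : ℤ) + ∑ i ∈ Finset.range k, |lext q.2 (i + 1)|

lemma msize_strictMono (q : Σ N : ℕ, (Fin N → ℤ)) : StrictMono (msize q) := by
  apply strictMono_nat_of_lt_succ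
  intro k
  unfold msize
  rw [Finset.sum_range_succ]
  have := abs_nonneg (lext q.2 (k + 1))
  push_cast
  linarith

lemma msize_cat {m n : ℕ} (f : Fin m → ℤ) (ga : Fin n → ℤ) :
    msize ⟨m + n, cat f ga⟩ m = (m : ℤ) + ∑ i, |f i| := by
  unfold msize
  congr 1
  rw [abs_sum_eq]
  refine Finset.sum_congr rfl fun i hi => ?_
  simp only []
  rw [lext_cat, if_pos (by have := Finset.mem_range.mp hi; omega)]

lemma nrev_nrev {n : ℕ} (g : Fin n → ℤ) : nrev (nrev g) = g := by
  funext i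
  have hi := i.isLt
  simp only [nrev, neg_neg]
  congr 1
  apply Fin.ext
  simp only []
  omega

lemma nrev_inj {n : ℕ} {g g' : Fin n → ℤ} (h : nrev g = nrev g') : g = g' := by
  have := congrArg nrev h
  rwa [nrev_nrev, nrev_nrev] at this

lemma cat_sigma_inj {m n m' n' : ℕ} {f : Fin m → ℤ} {ga : Fin n → ℤ}
    {f' : Fin m' → ℤ} {ga' : Fin n' → ℤ} {L : ℤ}
    (hs : (m : ℤ) + ∑ i, |f i| = L) (hs' : (m' : ℤ) + ∑ i, |f' i| = L)
    (h : (⟨m + n, cat f ga⟩ : Σ N : ℕ, (Fin N → ℤ)) = ⟨m' + n', cat f' ga'⟩) :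
    ∃ (_ : m = m') (_ : n = n'), HEq f f' ∧ HEq ga ga' := by
  have hm : m = m' := by
    have h1 : msize ⟨m + n, cat f ga⟩ m = L := by rw [msize_cat, hs]
    have h2 : msize ⟨m + n, cat f ga⟩ m' = L := by rw [h, msize_cat, hs']
    exact (msize_strictMono _).injective (h1.trans h2.symm)
  have hN : m + n = m' + n' := congrArg Sigma.fst h
  have hn : n = n' := by omega
  subst hm
  subst hn
  have hfun : cat f ga = cat f' ga' := by
    have h2 := (Sigma.mk.inj_iff.mp h).2
    exact eq_of_heq h2
  refine ⟨rfl, rfl, heq_of_eq ?_, heq_of_eq ?_⟩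
  · funext i
    have hi : (i : ℕ) < m := i.isLt
    have hfi := congrFun hfun ⟨(i : ℕ), by omega⟩
    have e1 : cat f ga ⟨(i : ℕ), by omega⟩ = f i := by
      unfold cat
      exact (dif_pos hi).trans (congrArg f (Fin.ext rfl))
    have e2 : cat f' ga' ⟨(i : ℕ), by omega⟩ = f' i := by
      unfold cat
      exact (dif_pos hi).trans (congrArg f' (Fin.ext rfl))
    rw [e1, e2] at hfi
    exact hfi
  · funext j
    have hj : (j : ℕ) < n := j.isLt
    have hgj := congrFun hfun ⟨m + (j : ℕ), by omega⟩
    have hnot : ¬ (m + (j : ℕ) < m) := by omega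
    have e1 : cat f ga ⟨m + (j : ℕ), by omega⟩ = ga j := by
      unfold cat
      exact (dif_neg hnot).trans (congrArg ga (Fin.ext (by show m + (j:ℕ) - m = (j:ℕ); omega)))
    have e2 : cat f' ga' ⟨m + (j : ℕ), by omega⟩ = ga' j := by
      unfold cat
      exact (dif_neg hnot).trans (congrArg ga' (Fin.ext (by show m + (j:ℕ) - m = (j:ℕ); omega)))
    rw [e1, e2] at hgj
    exact hgj

/-- Box of candidate configurations (all coordinates bounded by `L`). -/
def box (L N : ℕ) : Finset (Fin N → ℤ) := Fintype.piFinset fun _ => Finset.Icc (-(L : ℤ)) (L : ℤ)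

lemma mem_box_of_inConf {L N : ℕ} {ℓ : Fin N → ℤ} (h : inConf L N ℓ) : ℓ ∈ box L N := by
  rw [box, Fintype.mem_piFinset]
  intro i
  rw [Finset.mem_Icc, ← abs_le]
  calc |ℓ i| ≤ ∑ j, |ℓ j| :=
        Finset.single_le_sum (fun j _ => abs_nonneg (ℓ j)) (Finset.mem_univ i)
    _ = (L : ℤ) - N := h.1
    _ ≤ L := by omega

/-- The global index set. -/
def idx (L : ℕ) : Finset (Σ N : ℕ, (Fin N → ℤ)) := (Finset.Icc 1 L).sigma fun N => box L N

lemma idx_fst {L : ℕ} {q : Σ N : ℕ, (Fin N → ℤ)} (h : q ∈ idx L) : 1 ≤ q.1 ∧ q.1 ≤ L :=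
  Finset.mem_Icc.mp (Finset.mem_sigma.mp h).1

lemma mem_idx {L : ℕ} {q : Σ N : ℕ, (Fin N → ℤ)} (h : inConf L q.1 q.2) (h1 : 1 ≤ q.1) :
    q ∈ idx L := by
  rw [idx, Finset.mem_sigma]
  refine ⟨Finset.mem_Icc.mpr ⟨h1, ?_⟩, mem_box_of_inConf h⟩
  have h0 : (0 : ℤ) ≤ (L : ℤ) - q.1 := h.1 ▸ Finset.sum_nonneg fun i _ => abs_nonneg _
  omega

/-- Summand for the free partition function. -/
def gF (β δ : ℝ) (L : ℕ) (q : Σ N : ℕ, (Fin N → ℤ)) : ℝ :=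
  if inConf L q.1 q.2 then Real.exp (Ham β δ q.2) else 0

/-- Summand for the constrained partition function. -/
def gC (β δ : ℝ) (L : ℕ) (q : Σ N : ℕ, (Fin N → ℤ)) : ℝ :=
  if inConf L q.1 q.2 ∧ psum q.2 q.1 = 0 then Real.exp (Ham β δ q.2) else 0

lemma gF_nonneg (β δ : ℝ) (L : ℕ) (q : Σ N : ℕ, (Fin N → ℤ)) : 0 ≤ gF β δ L q := by
  unfold gF; split
  · exact (Real.exp_pos _).le
  · exact le_rfl

lemma gC_nonneg (β δ : ℝ) (L : ℕ) (q : Σ N : ℕ, (Fin N → ℤ)) : 0 ≤ gC β δ L q := by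
  unfold gC; split
  · exact (Real.exp_pos _).le
  · exact le_rfl

lemma gF_of_ne {β δ : ℝ} {L : ℕ} {q : Σ N : ℕ, (Fin N → ℤ)} (h : gF β δ L q ≠ 0) :
    inConf L q.1 q.2 := by
  by_contra hc
  exact h (if_neg hc)

lemma gC_of_ne {β δ : ℝ} {L : ℕ} {q : Σ N : ℕ, (Fin N → ℤ)} (h : gC β δ L q ≠ 0) :
    inConf L q.1 q.2 ∧ psum q.2 q.1 = 0 := by
  by_contra hc
  exact h (if_neg hc)

set_option maxHeartbeats 1000000 in
lemma Zplus_eq (β δ : ℝ) (L : ℕ) : Zplus β δ L = ∑ q ∈ idx L, gF β δ L q := by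
  rw [Zplus, idx, Finset.sum_sigma]
  refine Finset.sum_congr rfl fun N _ => ?_
  exact tsum_eq_sum fun ℓ hℓ => if_neg fun hc => hℓ (mem_box_of_inConf hc)

set_option maxHeartbeats 1000000 in
lemma Zplusc_eq (β δ : ℝ) (L : ℕ) : Zplusc β δ L = ∑ q ∈ idx L, gC β δ L q := by
  rw [Zplusc, idx, Finset.sum_sigma]
  refine Finset.sum_congr rfl fun N _ => ?_
  exact tsum_eq_sum fun ℓ hℓ => if_neg fun hc => hℓ (mem_box_of_inConf hc.1)

/-- The concatenation map on sigma pairs. -/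
def catQ (p : (Σ N : ℕ, (Fin N → ℤ)) × (Σ N : ℕ, (Fin N → ℤ))) : Σ N : ℕ, (Fin N → ℤ) :=
  ⟨p.1.1 + p.2.1, cat p.1.2 p.2.2⟩

/-- The concatenate-with-negated-reversal map on sigma pairs. -/
def catQr (p : (Σ N : ℕ, (Fin N → ℤ)) × (Σ N : ℕ, (Fin N → ℤ))) : Σ N : ℕ, (Fin N → ℤ) :=
  ⟨p.1.1 + p.2.1, cat p.1.2 (nrev p.2.2)⟩

lemma supermult (β δ : ℝ) (hβ : 0 < β) (hδ : 0 ≤ δ) (L₁ L₂ : ℕ) :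
    Zplusc β δ L₁ * Zplusc β δ L₂ ≤ Zplusc β δ (L₁ + L₂) := by
  classical
  rw [Zplusc_eq, Zplusc_eq, Zplusc_eq, Finset.sum_mul_sum, ← Finset.sum_product']
  set T := ((idx L₁ ×ˢ idx L₂).filter fun p => gC β δ L₁ p.1 * gC β δ L₂ p.2 ≠ 0) with hT
  have hfilter : (∑ p ∈ idx L₁ ×ˢ idx L₂, gC β δ L₁ p.1 * gC β δ L₂ p.2)
      = ∑ p ∈ T, gC β δ L₁ p.1 * gC β δ L₂ p.2 :=
    (Finset.sum_filter_of_ne (fun p _ h => h)).symm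
  rw [hfilter]
  have hcond : ∀ p ∈ T, (inConf L₁ p.1.1 p.1.2 ∧ psum p.1.2 p.1.1 = 0)
      ∧ (inConf L₂ p.2.1 p.2.2 ∧ psum p.2.2 p.2.1 = 0) := by
    intro p hp
    have h := (Finset.mem_filter.mp hp).2
    have h1 := mul_ne_zero_iff.mp h
    exact ⟨gC_of_ne h1.1, gC_of_ne h1.2⟩
  have hmemP : ∀ p ∈ T, p.1 ∈ idx L₁ ∧ p.2 ∈ idx L₂ := by
    intro p hp
    exact Finset.mem_product.mp (Finset.mem_filter.mp hp).1
  have hinj : ∀ p ∈ T, ∀ p' ∈ T, catQ p = catQ p' → p = p' := by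
    rintro ⟨⟨N₁, f⟩, N₂, g⟩ hp ⟨⟨N₁', f'⟩, N₂', g'⟩ hp' h
    obtain ⟨⟨c1, z1⟩, c2, z2⟩ := hcond _ hp
    obtain ⟨⟨c1', z1'⟩, c2', z2'⟩ := hcond _ hp'
    obtain ⟨rfl, rfl, hf, hg⟩ := cat_sigma_inj (L := (L₁ : ℤ))
      (by rw [c1.1]; ring) (by rw [c1'.1]; ring) h
    cases eq_of_heq hf
    cases eq_of_heq hg
    rfl
  calc ∑ p ∈ T, gC β δ L₁ p.1 * gC β δ L₂ p.2
      ≤ ∑ p ∈ T, gC β δ (L₁ + L₂) (catQ p) := by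
        apply Finset.sum_le_sum
        rintro ⟨⟨N₁, f⟩, N₂, g⟩ hp
        obtain ⟨⟨c1, z1⟩, c2, z2⟩ := hcond _ hp
        have himg := inConf_cat c1 c2 z1 z2
        show gC β δ L₁ ⟨N₁, f⟩ * gC β δ L₂ ⟨N₂, g⟩ ≤ gC β δ (L₁ + L₂) ⟨N₁ + N₂, cat f g⟩
        unfold gC
        rw [if_pos ⟨c1, z1⟩, if_pos ⟨c2, z2⟩, if_pos himg, ← Real.exp_add]
        exact Real.exp_le_exp.mpr
          (Ham_add_le hβ.le hδ (tws_cat_ge f g) (contacts_cat_zero f g z1))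
    _ = ∑ q ∈ T.image catQ, gC β δ (L₁ + L₂) q := by rw [Finset.sum_image hinj]
    _ ≤ ∑ q ∈ idx (L₁ + L₂), gC β δ (L₁ + L₂) q := by
        apply Finset.sum_le_sum_of_subset_of_nonneg
        · intro q hq
          obtain ⟨p, hp, rfl⟩ := Finset.mem_image.mp hq
          obtain ⟨⟨c1, z1⟩, c2, z2⟩ := hcond _ hp
          have himg := inConf_cat c1 c2 z1 z2
          have hm := hmemP _ hp
          exact mem_idx himg.1 (by have := (idx_fst hm.1).1; exact le_add_right this)
        · exact fun q _ _ => gC_nonneg β δ _ q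

/-- Summand for the free partition function with prescribed endpoint. -/
def gFa (β δ : ℝ) (L : ℕ) (a : ℤ) (q : Σ N : ℕ, (Fin N → ℤ)) : ℝ :=
  if psum q.2 q.1 = a then gF β δ L q else 0

/-- Free partition function restricted to endpoint `a`. -/
def Za (β δ : ℝ) (L : ℕ) (a : ℤ) : ℝ := ∑ q ∈ idx L, gFa β δ L a q

lemma gFa_nonneg (β δ : ℝ) (L : ℕ) (a : ℤ) (q : Σ N : ℕ, (Fin N → ℤ)) : 0 ≤ gFa β δ L a q := by
  unfold gFa; split
  · exact gF_nonneg β δ L q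
  · exact le_rfl

lemma Za_nonneg (β δ : ℝ) (L : ℕ) (a : ℤ) : 0 ≤ Za β δ L a :=
  Finset.sum_nonneg fun q _ => gFa_nonneg β δ L a q

lemma gFa_of_ne {β δ : ℝ} {L : ℕ} {a : ℤ} {q : Σ N : ℕ, (Fin N → ℤ)} (h : gFa β δ L a q ≠ 0) :
    inConf L q.1 q.2 ∧ psum q.2 q.1 = a := by
  by_contra hc
  apply h
  unfold gFa
  by_cases h1 : psum q.2 q.1 = a
  · rw [if_pos h1]
    unfold gF
    rw [if_neg]
    intro h2
    exact hc ⟨h2, h1⟩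
  · exact if_neg h1

lemma Zplus_eq_Za (β δ : ℝ) (L : ℕ) :
    Zplus β δ L = ∑ a ∈ Finset.Icc (0 : ℤ) ((L : ℤ) - 1), Za β δ L a := by
  classical
  unfold Za
  rw [Finset.sum_comm, Zplus_eq]
  refine Finset.sum_congr rfl fun q hq => ?_
  have hsum : ∀ b : ℤ, (∑ a ∈ Finset.Icc (0 : ℤ) ((L : ℤ) - 1), if b = a then gF β δ L q else 0)
      = if b ∈ Finset.Icc (0 : ℤ) ((L : ℤ) - 1) then gF β δ L q else 0 := by
    intro b
    rw [Finset.sum_ite_eq]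
  rw [show (∑ a ∈ Finset.Icc (0 : ℤ) ((L : ℤ) - 1), gFa β δ L a q)
      = ∑ a ∈ Finset.Icc (0 : ℤ) ((L : ℤ) - 1), if psum q.2 q.1 = a then gF β δ L q else 0
    from Finset.sum_congr rfl fun a _ => rfl, hsum]
  by_cases h0 : gF β δ L q = 0
  · rw [h0, ite_self]
  · have hc := gF_of_ne h0
    rw [if_pos]
    rw [Finset.mem_Icc]
    have hN := idx_fst hq
    constructor
    · exact nn_of_inConf hc q.1 hN.1 le_rfl
    · have h1 : psum q.2 q.1 ≤ ∑ i, |q.2 i| := by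
        rw [psum_top]
        exact Finset.sum_le_sum fun i _ => le_abs_self _
      have h2 := hc.1
      omega

lemma Za_sq_le (β δ : ℝ) (hβ : 0 < β) (hδ : 0 ≤ δ) (L : ℕ) (a : ℤ) :
    Za β δ L a ^ 2 ≤ Zplusc β δ (2 * L) := by
  classical
  rw [sq, Za, Finset.sum_mul_sum, ← Finset.sum_product']
  set T := ((idx L ×ˢ idx L).filter fun p => gFa β δ L a p.1 * gFa β δ L a p.2 ≠ 0) with hT
  have hfilter : (∑ p ∈ idx L ×ˢ idx L, gFa β δ L a p.1 * gFa β δ L a p.2)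
      = ∑ p ∈ T, gFa β δ L a p.1 * gFa β δ L a p.2 :=
    (Finset.sum_filter_of_ne (fun p _ h => h)).symm
  rw [hfilter]
  have hcond : ∀ p ∈ T, (inConf L p.1.1 p.1.2 ∧ psum p.1.2 p.1.1 = a)
      ∧ (inConf L p.2.1 p.2.2 ∧ psum p.2.2 p.2.1 = a) := by
    intro p hp
    have h := (Finset.mem_filter.mp hp).2
    have h1 := mul_ne_zero_iff.mp h
    exact ⟨gFa_of_ne h1.1, gFa_of_ne h1.2⟩
  have hmemP : ∀ p ∈ T, p.1 ∈ idx L ∧ p.2 ∈ idx L := by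
    intro p hp
    exact Finset.mem_product.mp (Finset.mem_filter.mp hp).1
  have h2L : L + L = 2 * L := by ring
  have hinj : ∀ p ∈ T, ∀ p' ∈ T, catQr p = catQr p' → p = p' := by
    rintro ⟨⟨N₁, f⟩, N₂, g⟩ hp ⟨⟨N₁', f'⟩, N₂', g'⟩ hp' h
    obtain ⟨⟨c1, z1⟩, c2, z2⟩ := hcond _ hp
    obtain ⟨⟨c1', z1'⟩, c2', z2'⟩ := hcond _ hp'
    simp only [catQr] at h
    obtain ⟨rfl, rfl, hf, hg⟩ := cat_sigma_inj (L := (L : ℤ))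
      (by rw [c1.1]; ring) (by rw [c1'.1]; ring) h
    cases eq_of_heq hf
    cases nrev_inj (eq_of_heq hg)
    rfl
  calc ∑ p ∈ T, gFa β δ L a p.1 * gFa β δ L a p.2
      ≤ ∑ p ∈ T, gC β δ (2 * L) (catQr p) := by
        apply Finset.sum_le_sum
        rintro ⟨⟨N₁, f⟩, N₂, g⟩ hp
        obtain ⟨⟨c1, z1⟩, c2, z2⟩ := hcond _ hp
        have hmem := hmemP _ hp
        have hn2 : 1 ≤ N₂ := (idx_fst hmem.2).1
        have hfg : psum f N₁ = psum g N₂ := by rw [z1, z2]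
        have himg := inConf_cat_nrev c1 c2 hfg
        rw [h2L] at himg
        show gFa β δ L a ⟨N₁, f⟩ * gFa β δ L a ⟨N₂, g⟩
          ≤ gC β δ (2 * L) ⟨N₁ + N₂, cat f (nrev g)⟩
        unfold gFa gF gC
        rw [if_pos z1, if_pos z2, if_pos c1, if_pos c2, if_pos himg, ← Real.exp_add]
        apply Real.exp_le_exp.mpr
        apply Ham_add_le hβ.le hδ
        · have h1 := tws_cat_ge f (nrev g)
          rwa [tws_nrev] at h1
        · exact contacts_cat_nrev f g hn2 hfg
    _ = ∑ q ∈ T.image catQr, gC β δ (2 * L) q := by rw [Finset.sum_image hinj]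
    _ ≤ ∑ q ∈ idx (2 * L), gC β δ (2 * L) q := by
        apply Finset.sum_le_sum_of_subset_of_nonneg
        · intro q hq
          obtain ⟨p, hp, rfl⟩ := Finset.mem_image.mp hq
          obtain ⟨⟨c1, z1⟩, c2, z2⟩ := hcond _ hp
          have hmem := hmemP _ hp
          have hfg : psum p.1.2 p.1.1 = psum p.2.2 p.2.1 := by rw [z1, z2]
          have himg := inConf_cat_nrev c1 c2 hfg
          rw [h2L] at himg
          exact mem_idx (q := catQr p) himg.1 (le_add_right (idx_fst hmem.1).1)
        · exact fun q _ _ => gC_nonneg β δ _ q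
    _ = Zplusc β δ (2 * L) := (Zplusc_eq β δ (2 * L)).symm

end Aux18

/-- supermultiplicativity of the constrained partition function, and
comparison between the free and constrained partition functions. -/
theorem statement18 (β δ : ℝ) (hβ : 0 < β) (hδ : 0 ≤ δ) :
    (∀ L₁ L₂ : ℕ, 1 ≤ L₁ → 1 ≤ L₂ →
      Zplusc β δ L₁ * Zplusc β δ L₂ ≤ Zplusc β δ (L₁ + L₂)) ∧
    (∀ L : ℕ, 1 ≤ L →
      1 / (L : ℝ) ^ 2 * Zplus β δ L ^ 2 ≤ Zplusc β δ (2 * L) ∧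
        Zplusc β δ (2 * L) ≤ Zplus β δ (2 * L)) := by
  constructor
  · intro L₁ L₂ _ _
    exact supermult β δ hβ hδ L₁ L₂
  · intro L hL
    constructor
    · have hLpos : (0 : ℝ) < (L : ℝ) := by exact_mod_cast hL
      set E := Finset.Icc (0 : ℤ) ((L : ℤ) - 1) with hE
      have hEne : E.Nonempty := ⟨0, Finset.mem_Icc.mpr ⟨le_rfl, by omega⟩⟩
      obtain ⟨b, _, hbmax⟩ := Finset.exists_max_image E (Za β δ L) hEne
      have hcard : E.card = L := by rw [hE, Int.card_Icc]; omega
      have h1 : Zplus β δ L ≤ (L : ℝ) * Za β δ L b := by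
        rw [Zplus_eq_Za]
        calc (∑ a ∈ E, Za β δ L a) ≤ ∑ _a ∈ E, Za β δ L b :=
              Finset.sum_le_sum fun a ha => hbmax a ha
          _ = (E.card : ℝ) * Za β δ L b := by rw [Finset.sum_const, nsmul_eq_mul]
          _ = (L : ℝ) * Za β δ L b := by rw [hcard]
      have h0 : 0 ≤ Zplus β δ L := by
        rw [Zplus_eq]
        exact Finset.sum_nonneg fun q _ => gF_nonneg β δ L q
      have h2 : Zplus β δ L ^ 2 ≤ ((L : ℝ) * Za β δ L b) ^ 2 := pow_le_pow_left₀ h0 h1 2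
      have h3 := Za_sq_le β δ hβ hδ L b
      rw [mul_pow] at h2
      have h4 : Zplus β δ L ^ 2 ≤ (L : ℝ) ^ 2 * Zplusc β δ (2 * L) :=
        le_trans h2 (mul_le_mul_of_nonneg_left h3 (by positivity))
      calc 1 / (L : ℝ) ^ 2 * Zplus β δ L ^ 2
          ≤ 1 / (L : ℝ) ^ 2 * ((L : ℝ) ^ 2 * Zplusc β δ (2 * L)) :=
            mul_le_mul_of_nonneg_left h4 (by positivity)
        _ = Zplusc β δ (2 * L) := by
            field_simp
    · rw [Zplusc_eq, Zplus_eq]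
      apply Finset.sum_le_sum
      intro q _
      by_cases h1 : inConf (2 * L) q.1 q.2
      · unfold gC gF
        rw [if_pos h1]
        by_cases h2 : psum q.2 q.1 = 0
        · rw [if_pos ⟨h1, h2⟩]
        · rw [if_neg (fun hc => h2 hc.2)]
          exact (Real.exp_pos _).le
      · unfold gC gF
        rw [if_neg h1, if_neg (fun hc => h1 hc.1)]

end
end
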